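/- arXiv:1511.00353 — 10 statements merged into one kernel-verified Lean document; each statement's English description precedes it below -/
import Mathlib

section
/- Let (E_t)_{t≥1} be i.i.d. nonnegative random variables, B̄ > 0, γ > 0, and μ = E[min{E_1, B̄}]. For any admissible online policy (g_t), where each g_t is a measurable function of (E_1,…,E_t), the n-horizon expected throughput satisfies (1/n)∑_{t=1}^n E[½·log₂(1 + γ·g_t)] ≤ ½·log₂(1 + (γ/n)·B̄ + γ·((n−1)/n)·μ) for every n ≥ 1. -/
open MeasureTheory ProbabilityTheory Filter Finset

/-- **Finite-horizon upper bound on the expected throughput.** For i.i.d. nonnegative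
energy arrivals `E`, battery capacity `B > 0`, SNR `γ > 0`, `μ = 𝔼[min (E 1) B]`, and
any admissible online policy `g`, the `n`-horizon expected throughput satisfies
`(1/n) ∑_{t=1}^n 𝔼[½ log₂(1 + γ g t)] ≤ ½ log₂(1 + (γ/n) B + γ ((n-1)/n) μ)`. -/
theorem stmt_1 {Ω : Type*} [MeasurableSpace Ω] (P : Measure Ω) [IsProbabilityMeasure P]
    (B γ : ℝ) (hB : 0 < B) (hγ : 0 < γ)
    (E : ℕ → Ω → ℝ) (hEmeas : ∀ t, Measurable (E t))
    (hEnn : ∀ t ω, 0 ≤ E t ω)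
    (hindep : iIndepFun E P)
    (hident : ∀ t, IdentDistrib (E t) (E 1) P P)
    (μ : ℝ) (hμ : μ = ∫ ω, min (E 1 ω) B ∂P)
    (g b : ℕ → Ω → ℝ)
    (hb1 : ∀ ω, b 1 ω = B)
    (hbrec : ∀ t, 1 ≤ t → ∀ ω, b (t + 1) ω = min (b t ω - g t ω + E (t + 1) ω) B)
    (hadm : ∀ t, 1 ≤ t → ∀ ω, 0 ≤ g t ω ∧ g t ω ≤ b t ω)
    (honline : ∀ t, 1 ≤ t → ∃ h : (Fin t → ℝ) → ℝ, Measurable h ∧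
      ∀ ω, g t ω = h (fun i => E (i.1 + 1) ω))
    (n : ℕ) (hn : 1 ≤ n) :
    (1 / (n : ℝ)) * ∑ t ∈ Finset.Icc 1 n,
        ∫ ω, (1 / 2) * Real.logb 2 (1 + γ * g t ω) ∂P
      ≤ (1 / 2) * Real.logb 2 (1 + (γ / (n : ℝ)) * B + γ * (((n : ℝ) - 1) / (n : ℝ)) * μ) := by
  have hlog2 : (0:ℝ) < Real.log 2 := Real.log_pos one_lt_two
  have hμ0 : 0 ≤ μ := by
    rw [hμ]; exact integral_nonneg fun ω => le_min (hEnn 1 ω) hB.le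
  have hn1 : (1:ℝ) ≤ (n:ℝ) := by exact_mod_cast hn
  have hnpos : (0:ℝ) < (n:ℝ) := lt_of_lt_of_le one_pos hn1
  set c : ℝ := 1 + (γ / (n:ℝ)) * B + γ * (((n:ℝ) - 1) / (n:ℝ)) * μ with hc
  have hc1 : (1:ℝ) ≤ c := by
    have h1 : 0 ≤ (γ / (n:ℝ)) * B := by positivity
    have h2 : 0 ≤ γ * (((n:ℝ) - 1) / (n:ℝ)) * μ := by
      have : 0 ≤ ((n:ℝ) - 1) / (n:ℝ) := by
        apply div_nonneg <;> linarith
      positivity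
    simp only [hc]; linarith
  have hcpos : (0:ℝ) < c := lt_of_lt_of_le one_pos hc1
  clear_value c
  -- measurability of g t
  have hgmeas : ∀ t, 1 ≤ t → Measurable (g t) := by
    intro t ht
    obtain ⟨h, hh, hgh⟩ := honline t ht
    have hm : Measurable fun ω => (fun i : Fin t => E (i.1 + 1) ω) :=
      measurable_pi_lambda _ fun i => hEmeas _
    have : Measurable fun ω => h (fun i : Fin t => E (i.1 + 1) ω) := hh.comp hm
    convert this using 1
    exact funext hgh
  -- battery stays below B
  have hbB : ∀ t, 1 ≤ t → ∀ ω, b t ω ≤ B := by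
    intro t ht ω
    induction t with
    | zero => omega
    | succ k ih =>
      rcases Nat.eq_zero_or_pos k with hk | hk
      · subst hk; rw [hb1]
      · rw [hbrec k hk ω]
        exact min_le_right _ _
  have hg0 : ∀ t, 1 ≤ t → ∀ ω, 0 ≤ g t ω := fun t ht ω => (hadm t ht ω).1
  have hgB : ∀ t, 1 ≤ t → ∀ ω, g t ω ≤ B := fun t ht ω =>
    le_trans (hadm t ht ω).2 (hbB t ht ω)
  -- integrability of g t
  have hgint : ∀ t, 1 ≤ t → Integrable (g t) P := by
    intro t ht
    refine (integrable_const B).mono' (hgmeas t ht).aestronglyMeasurable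
      (Filter.Eventually.of_forall fun ω => ?_)
    rw [Real.norm_eq_abs, abs_of_nonneg (hg0 t ht ω)]
    exact hgB t ht ω
  -- integrability of min (E t) B
  have hminint : ∀ t, Integrable (fun ω => min (E t ω) B) P := by
    intro t
    refine (integrable_const B).mono'
      ((hEmeas t).min measurable_const).aestronglyMeasurable
      (Filter.Eventually.of_forall fun ω => ?_)
    rw [Real.norm_eq_abs, abs_of_nonneg (le_min (hEnn t ω) hB.le)]
    exact min_le_right _ _
  have hminμ : ∀ t, (∫ ω, min (E t ω) B ∂P) = μ := by
    intro t
    rw [hμ]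
    exact ((hident t).comp ((measurable_id.min measurable_const))).integral_eq
  -- pointwise conservation: partial throughput plus battery is bounded
  have hQ : ∀ m : ℕ, ∀ ω, (∑ t ∈ Finset.Icc 1 m, g t ω) + b (m + 1) ω
      ≤ B + ∑ t ∈ Finset.Icc 2 (m + 1), min (E t ω) B := by
    intro m
    induction m with
    | zero => intro ω; simp [hb1]
    | succ k ih =>
      intro ω
      rw [Finset.sum_Icc_succ_top (by omega : 1 ≤ k + 1),
        Finset.sum_Icc_succ_top (by omega : 2 ≤ k + 1 + 1)]
      have h2 := (hadm (k + 1) (by omega) ω).2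
      have h3 : b (k + 1 + 1) ω ≤ b (k + 1) ω - g (k + 1) ω + min (E (k + 2) ω) B := by
        rw [hbrec (k + 1) (by omega) ω]
        calc min (b (k + 1) ω - g (k + 1) ω + E (k + 1 + 1) ω) B
            ≤ min (b (k + 1) ω - g (k + 1) ω + E (k + 1 + 1) ω)
              (b (k + 1) ω - g (k + 1) ω + B) := by
              apply min_le_min le_rfl; linarith
          _ = b (k + 1) ω - g (k + 1) ω + min (E (k + 2) ω) B := by
              rw [show (k+1+1) = k + 2 from rfl, ← min_add_add_left]
      have := ih ω
      linarith
  have hptwise : ∀ ω, (∑ t ∈ Finset.Icc 1 n, g t ω)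
      ≤ B + ∑ t ∈ Finset.Icc 2 n, min (E t ω) B := by
    intro ω
    obtain ⟨m, rfl⟩ : ∃ m, n = m + 1 := ⟨n - 1, by omega⟩
    rw [Finset.sum_Icc_succ_top (by omega : 1 ≤ m + 1)]
    have h1 := hQ m ω
    have h2 := (hadm (m + 1) (by omega) ω).2
    linarith
  -- expected sum bound
  have hsumint : (∑ t ∈ Finset.Icc 1 n, ∫ ω, g t ω ∂P) ≤ B + ((n:ℝ) - 1) * μ := by
    have h1 : (∑ t ∈ Finset.Icc 1 n, ∫ ω, g t ω ∂P)
        = ∫ ω, (∑ t ∈ Finset.Icc 1 n, g t ω) ∂P := by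
      rw [integral_finset_sum]
      intro t ht
      exact hgint t (Finset.mem_Icc.mp ht).1
    have h2 : (∫ ω, (∑ t ∈ Finset.Icc 1 n, g t ω) ∂P)
        ≤ ∫ ω, (B + ∑ t ∈ Finset.Icc 2 n, min (E t ω) B) ∂P := by
      apply integral_mono_of_nonneg
      · refine Filter.Eventually.of_forall fun ω => ?_
        simp only [Pi.zero_apply]
        exact Finset.sum_nonneg fun t ht => hg0 t (Finset.mem_Icc.mp ht).1 ω
      · exact (integrable_const B).add (integrable_finset_sum _ fun t _ => hminint t)
      · exact Filter.Eventually.of_forall hptwise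
    have h3 : (∫ ω, (B + ∑ t ∈ Finset.Icc 2 n, min (E t ω) B) ∂P)
        = B + ((n:ℝ) - 1) * μ := by
      rw [integral_add (integrable_const B) (integrable_finset_sum _ fun t _ => hminint t),
        integral_const, integral_finset_sum _ fun t _ => hminint t]
      simp only [probReal_univ, smul_eq_mul, one_mul]
      congr 1
      rw [Finset.sum_congr rfl fun t _ => hminμ t, Finset.sum_const,
        Nat.card_Icc, nsmul_eq_mul]
      congr 1
      have he : n + 1 - 2 = n - 1 := by omega
      rw [he, Nat.cast_sub hn, Nat.cast_one]
    linarith [h1 ▸ le_trans h2 (le_of_eq h3)]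
  -- tangent line bound
  have hkey : ∀ x : ℝ, 1 ≤ x → (1/2) * Real.logb 2 x
      ≤ (1/2) * Real.logb 2 c + (1 / (2 * Real.log 2)) * (x / c - 1) := by
    intro x hx
    have hxpos : (0:ℝ) < x := lt_of_lt_of_le one_pos hx
    have h1 : Real.log (x / c) ≤ x / c - 1 :=
      Real.log_le_sub_one_of_pos (div_pos hxpos hcpos)
    have h2 : Real.logb 2 x - Real.logb 2 c = Real.log (x / c) / Real.log 2 := by
      rw [Real.log_div hxpos.ne' hcpos.ne']
      simp only [Real.logb]
      ring
    have h3 : Real.log (x / c) / Real.log 2 ≤ (x / c - 1) / Real.log 2 :=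
      div_le_div_of_nonneg_right h1 hlog2.le
    have h4 : Real.logb 2 x ≤ Real.logb 2 c + (x / c - 1) / Real.log 2 := by linarith
    have : (1 / (2 * Real.log 2)) * (x / c - 1) = (1/2) * ((x / c - 1) / Real.log 2) := by
      field_simp
      try (left; ring)
    rw [this]
    linarith
  set A : ℝ := (1/2) * Real.logb 2 c + (1 / (2 * Real.log 2)) * (1 / c - 1) with hA
  set K : ℝ := γ / (2 * Real.log 2 * c) with hK
  have hK0 : 0 ≤ K := by positivity
  -- per-term bound
  have hterm : ∀ t ∈ Finset.Icc 1 n,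
      (∫ ω, (1 / 2) * Real.logb 2 (1 + γ * g t ω) ∂P) ≤ A + K * ∫ ω, g t ω ∂P := by
    intro t ht
    have ht1 : 1 ≤ t := (Finset.mem_Icc.mp ht).1
    have hint : Integrable (fun ω => A + K * g t ω) P :=
      (integrable_const A).add ((hgint t ht1).const_mul K)
    have hle : (∫ ω, (1 / 2) * Real.logb 2 (1 + γ * g t ω) ∂P)
        ≤ ∫ ω, (A + K * g t ω) ∂P := by
      apply integral_mono_of_nonneg
      · refine Filter.Eventually.of_forall fun ω => ?_
        have h1x : (1:ℝ) ≤ 1 + γ * g t ω := by nlinarith [hg0 t ht1 ω]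
        have hlb := Real.logb_nonneg one_lt_two h1x
        simp only [Pi.zero_apply]
        linarith
      · exact hint
      · refine Filter.Eventually.of_forall fun ω => ?_
        have hx1 : (1:ℝ) ≤ 1 + γ * g t ω := by nlinarith [hg0 t ht1 ω]
        have := hkey (1 + γ * g t ω) hx1
        have heq : (1 / (2 * Real.log 2)) * ((1 + γ * g t ω) / c - 1)
            = (1 / (2 * Real.log 2)) * (1 / c - 1) + K * g t ω := by
          rw [hK]; field_simp; ring
        rw [hA]
        linarith
    have heqint : (∫ ω, (A + K * g t ω) ∂P) = A + K * ∫ ω, g t ω ∂P := by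
      rw [integral_add (integrable_const A) ((hgint t ht1).const_mul K),
        integral_const, integral_const_mul, probReal_univ, one_smul]
    linarith [hle.trans_eq heqint]
  -- sum up
  have hsum : (∑ t ∈ Finset.Icc 1 n, ∫ ω, (1 / 2) * Real.logb 2 (1 + γ * g t ω) ∂P)
      ≤ (n:ℝ) * A + K * (B + ((n:ℝ) - 1) * μ) := by
    calc (∑ t ∈ Finset.Icc 1 n, ∫ ω, (1 / 2) * Real.logb 2 (1 + γ * g t ω) ∂P)
        ≤ ∑ t ∈ Finset.Icc 1 n, (A + K * ∫ ω, g t ω ∂P) := Finset.sum_le_sum hterm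
      _ = (n:ℝ) * A + K * ∑ t ∈ Finset.Icc 1 n, ∫ ω, g t ω ∂P := by
          rw [Finset.sum_add_distrib, Finset.sum_const, Nat.card_Icc,
            Finset.mul_sum]
          simp only [Nat.add_sub_cancel, nsmul_eq_mul]
      _ ≤ (n:ℝ) * A + K * (B + ((n:ℝ) - 1) * μ) := by
          have := mul_le_mul_of_nonneg_left hsumint hK0
          linarith
  -- final algebra
  have hfinal : A + K * (B + ((n:ℝ) - 1) * μ) / (n:ℝ) = (1/2) * Real.logb 2 c := by
    have hS : (n:ℝ) * (c - 1) = γ * (B + ((n:ℝ) - 1) * μ) := by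
      rw [hc]
      field_simp
      ring
    have hzero : (1 / (2 * Real.log 2)) * (1 / c - 1)
        + K * (B + ((n:ℝ) - 1) * μ) / (n:ℝ) = 0 := by
      have h1 : K * (B + ((n:ℝ) - 1) * μ) / (n:ℝ)
          = (γ * (B + ((n:ℝ) - 1) * μ)) / (2 * Real.log 2 * c * (n:ℝ)) := by
        rw [hK]; ring
      rw [h1, ← hS]
      field_simp
      ring
    rw [hA]
    linarith
  calc (1 / (n:ℝ)) * ∑ t ∈ Finset.Icc 1 n,
        ∫ ω, (1 / 2) * Real.logb 2 (1 + γ * g t ω) ∂P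
      ≤ (1 / (n:ℝ)) * ((n:ℝ) * A + K * (B + ((n:ℝ) - 1) * μ)) := by
        apply mul_le_mul_of_nonneg_left hsum
        positivity
    _ = A + K * (B + ((n:ℝ) - 1) * μ) / (n:ℝ) := by
        field_simp
    _ = (1/2) * Real.logb 2 c := hfinal
end

section
/- Let (E_t)_{t≥1} be i.i.d. nonnegative random variables, B̄ > 0, γ > 0, and μ = E[min{E_1, B̄}]. Then the optimal long-term average throughput Θ, defined as the supremum over all admissible online policies g of liminf_{n→∞} T_n(g), satisfies Θ ≤ ½·log₂(1 + γ·μ). -/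
open MeasureTheory ProbabilityTheory Filter Finset

private lemma integrable_of_bdd' {Ω : Type*} [MeasurableSpace Ω] {P : Measure Ω}
    [IsFiniteMeasure P] {f : Ω → ℝ} (hf : Measurable f) {C : ℝ} (h : ∀ ω, |f ω| ≤ C) :
    Integrable f P :=
  (integrable_const C).mono' hf.aestronglyMeasurable (ae_of_all _ fun ω => by
    simpa using h ω)

/-- **Upper bound on the optimal long-term average throughput.** For i.i.d. nonnegative
energy arrivals `E`, battery capacity `B > 0`, SNR `γ > 0`, and `μ = 𝔼[min (E 1) B]`,
the optimal throughput `Θ`, i.e. the supremum over all admissible online policies of the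
liminf of the `n`-horizon expected throughput, satisfies `Θ ≤ ½ log₂(1 + γ μ)`. -/
theorem stmt_2 {Ω : Type*} [MeasurableSpace Ω] (P : Measure Ω) [IsProbabilityMeasure P]
    (B γ : ℝ) (hB : 0 < B) (hγ : 0 < γ)
    (E : ℕ → Ω → ℝ) (hEmeas : ∀ t, Measurable (E t))
    (hEnn : ∀ t ω, 0 ≤ E t ω)
    (hindep : iIndepFun E P)
    (hident : ∀ t, IdentDistrib (E t) (E 1) P P)
    (μ : ℝ) (hμ : μ = ∫ ω, min (E 1 ω) B ∂P) :
    sSup {r : ℝ | ∃ g b : ℕ → Ω → ℝ,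
        (∀ ω, b 1 ω = B) ∧
        (∀ t, 1 ≤ t → ∀ ω, b (t + 1) ω = min (b t ω - g t ω + E (t + 1) ω) B) ∧
        (∀ t, 1 ≤ t → ∀ ω, 0 ≤ g t ω ∧ g t ω ≤ b t ω) ∧
        (∀ t, 1 ≤ t → ∃ h : (Fin t → ℝ) → ℝ, Measurable h ∧
          ∀ ω, g t ω = h (fun i => E (i.1 + 1) ω)) ∧
        r = liminf (fun n : ℕ => (1 / (n : ℝ)) * ∑ t ∈ Finset.Icc 1 n,
              ∫ ω, (1 / 2) * Real.logb 2 (1 + γ * g t ω) ∂P) atTop}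
      ≤ (1 / 2) * Real.logb 2 (1 + γ * μ) := by
  have h2 : (0:ℝ) < Real.log 2 := Real.log_pos one_lt_two
  have hμnn : 0 ≤ μ := by
    rw [hμ]; exact integral_nonneg fun ω => le_min (hEnn 1 ω) hB.le
  have hL : 0 ≤ (1/2) * Real.logb 2 (1 + γ * μ) := by
    have h1 : (1:ℝ) ≤ 1 + γ * μ := by nlinarith
    have := Real.logb_nonneg one_lt_two h1
    linarith
  -- tangent line inequality for the concave function x ↦ ½ log₂(1+γx)
  have tangent : ∀ m x : ℝ, 0 ≤ m → 0 ≤ x →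
      (1/2) * Real.logb 2 (1 + γ * x) ≤
        (1/2) * Real.logb 2 (1 + γ * m) + (γ / (2 * Real.log 2 * (1 + γ * m))) * (x - m) := by
    intro m x hm hx
    have hc : (0:ℝ) < 1 + γ * m := by nlinarith
    have hy : (0:ℝ) < 1 + γ * x := by nlinarith
    have key : Real.log (1 + γ * x) ≤ Real.log (1 + γ * m) + (γ * (x - m)) / (1 + γ * m) := by
      have h1 := Real.log_le_sub_one_of_pos (div_pos hy hc)
      rw [Real.log_div hy.ne' hc.ne'] at h1
      have h3 : (1 + γ * x) / (1 + γ * m) - 1 = (γ * (x - m)) / (1 + γ * m) := by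
        field_simp
        try ring
      linarith
    have expand : (γ / (2 * Real.log 2 * (1 + γ * m))) * (x - m)
        = ((γ * (x - m)) / (1 + γ * m)) * (1 / (2 * Real.log 2)) := by
      rw [div_mul_eq_mul_div, div_mul_eq_mul_div, mul_one_div, div_div]
      try ring
    calc (1/2) * Real.logb 2 (1 + γ * x)
        = Real.log (1 + γ * x) * (1 / (2 * Real.log 2)) := by rw [Real.logb]; ring
      _ ≤ (Real.log (1 + γ * m) + (γ * (x - m)) / (1 + γ * m)) * (1 / (2 * Real.log 2)) := by
          apply mul_le_mul_of_nonneg_right key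
          positivity
      _ = (1/2) * Real.logb 2 (1 + γ * m) + (γ / (2 * Real.log 2 * (1 + γ * m))) * (x - m) := by
          rw [expand, Real.logb]; ring
  apply Real.sSup_le _ hL
  rintro r ⟨g, b, hb1, hb2, hg, hgm, hr⟩
  -- basic facts
  have hbB : ∀ t, 1 ≤ t → ∀ ω, b t ω ≤ B := by
    intro t ht ω
    match t, ht with
    | 1, _ => exact (hb1 ω).le
    | (s+2), _ => rw [hb2 (s+1) (by omega) ω]; exact min_le_right _ _
  have hbnn : ∀ t, 1 ≤ t → ∀ ω, 0 ≤ b t ω := fun t ht ω => (hg t ht ω).1.trans (hg t ht ω).2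
  have hgmeas : ∀ t, 1 ≤ t → Measurable (g t) := by
    intro t ht
    obtain ⟨h, hh, hgh⟩ := hgm t ht
    have : g t = fun ω => h (fun i => E (i.1 + 1) ω) := funext hgh
    rw [this]
    exact hh.comp (measurable_pi_lambda _ fun i => hEmeas (i.1 + 1))
  have hIg : ∀ t, 1 ≤ t → Integrable (g t) P := by
    intro t ht
    refine integrable_of_bdd' (hgmeas t ht) (C := B) fun ω => ?_
    rw [abs_of_nonneg (hg t ht ω).1]
    exact (hg t ht ω).2.trans (hbB t ht ω)
  have hImin : ∀ t, Integrable (fun ω => min (E t ω) B) P := by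
    intro t
    refine integrable_of_bdd' ((hEmeas t).min measurable_const) (C := B) fun ω => ?_
    rw [abs_of_nonneg (le_min (hEnn t ω) hB.le)]
    exact min_le_right _ _
  have hmin : ∀ t, ∫ ω, min (E t ω) B ∂P = μ := by
    intro t
    rw [hμ]
    exact ((hident t).comp (measurable_id.min measurable_const)).integral_eq
  -- step inequality
  have hstep : ∀ t, 1 ≤ t → ∀ ω, b (t+1) ω ≤ b t ω - g t ω + min (E (t+1) ω) B := by
    intro t ht ω
    rw [hb2 t ht ω]
    rcases le_total (E (t+1) ω) B with h | h
    · rw [min_eq_left h]; exact min_le_left _ _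
    · rw [min_eq_right h]
      have h1 := (hg t ht ω).2
      have h3 := min_le_right (b t ω - g t ω + E (t+1) ω) B
      linarith
  -- telescoping
  have hsum : ∀ n : ℕ, ∀ ω, ∑ t ∈ Finset.Icc 1 n, g t ω + b (n+1) ω
      ≤ B + ∑ t ∈ Finset.Icc 1 n, min (E (t+1) ω) B := by
    intro n ω
    induction n with
    | zero => simp [hb1 ω]
    | succ k ih =>
      rw [Finset.sum_Icc_succ_top (by omega : 1 ≤ k+1),
        Finset.sum_Icc_succ_top (by omega : 1 ≤ k+1)]
      have hst := hstep (k+1) (by omega) ω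
      linarith
  -- expected sum bound
  have hsumI : ∀ n : ℕ, ∑ t ∈ Finset.Icc 1 n, ∫ ω, g t ω ∂P ≤ B + n * μ := by
    intro n
    have h1 : ∑ t ∈ Finset.Icc 1 n, ∫ ω, g t ω ∂P
        = ∫ ω, ∑ t ∈ Finset.Icc 1 n, g t ω ∂P :=
      (integral_finset_sum _ fun t ht => hIg t (Finset.mem_Icc.mp ht).1).symm
    have hRint : Integrable (fun ω => B + ∑ t ∈ Finset.Icc 1 n, min (E (t+1) ω) B) P :=
      (integrable_const B).add (integrable_finset_sum _ fun t _ => hImin (t+1))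
    have h2' : ∫ ω, ∑ t ∈ Finset.Icc 1 n, g t ω ∂P
        ≤ ∫ ω, (B + ∑ t ∈ Finset.Icc 1 n, min (E (t+1) ω) B) ∂P := by
      refine integral_mono (integrable_finset_sum _ fun t ht => hIg t (Finset.mem_Icc.mp ht).1)
        hRint fun ω => ?_
      have := hsum n ω
      have := hbnn (n+1) (by omega) ω
      dsimp only
      linarith
    have h3 : ∫ ω, (B + ∑ t ∈ Finset.Icc 1 n, min (E (t+1) ω) B) ∂P = B + n * μ := by
      rw [integral_add (integrable_const B) (integrable_finset_sum _ fun t _ => hImin (t+1)),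
        integral_const, integral_finset_sum _ fun t _ => hImin (t+1)]
      simp [hmin, Nat.card_Icc]
      try ring
    rw [h1]
    linarith [h2', h3.ge, h3.le]
  -- per-horizon bound
  have hbound : ∀ n : ℕ, 1 ≤ n →
      (1 / (n : ℝ)) * ∑ t ∈ Finset.Icc 1 n,
          ∫ ω, (1 / 2) * Real.logb 2 (1 + γ * g t ω) ∂P
        ≤ (1/2) * Real.logb 2 (1 + γ * (μ + B / (n : ℝ))) := by
    intro n hn
    have hnpos : (0:ℝ) < n := by exact_mod_cast hn
    set m : ℝ := μ + B / (n : ℝ) with hmdef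
    clear_value m
    have hm : 0 ≤ m := by rw [hmdef]; exact add_nonneg hμnn (by positivity)
    have hc : (0:ℝ) < 1 + γ * m := by nlinarith
    set K : ℝ := γ / (2 * Real.log 2 * (1 + γ * m)) with hKdef
    clear_value K
    have hK : 0 ≤ K := by
      rw [hKdef]
      exact div_nonneg hγ.le (mul_nonneg (mul_nonneg two_pos.le h2.le) hc.le)
    have hfint : ∀ t, 1 ≤ t →
        Integrable (fun ω => (1 / 2) * Real.logb 2 (1 + γ * g t ω)) P := by
      intro t ht
      have hmeas : Measurable (fun ω => (1 / 2) * Real.logb 2 (1 + γ * g t ω)) := by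
        have : (fun ω => (1 / 2) * Real.logb 2 (1 + γ * g t ω))
            = fun ω => (1 / 2) * (Real.log (1 + γ * g t ω) / Real.log 2) := by
          simp [Real.logb]
        rw [this]
        exact (((Real.measurable_log.comp
          (measurable_const.add ((hgmeas t ht).const_mul γ))).div_const _).const_mul _)
      refine integrable_of_bdd' hmeas (C := (1/2) * Real.logb 2 (1 + γ * B)) fun ω => ?_
      have h1 : (1:ℝ) ≤ 1 + γ * g t ω := by nlinarith [(hg t ht ω).1]
      have h1' : 1 + γ * g t ω ≤ 1 + γ * B := by
        nlinarith [(hg t ht ω).2, hbB t ht ω]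
      rw [abs_of_nonneg (by
        have := Real.logb_nonneg one_lt_two h1; linarith)]
      have := Real.logb_le_logb_of_le one_lt_two (by linarith : (0:ℝ) < 1 + γ * g t ω) h1'
      linarith
    have hper : ∀ t, 1 ≤ t →
        ∫ ω, (1 / 2) * Real.logb 2 (1 + γ * g t ω) ∂P
          ≤ (1/2) * Real.logb 2 (1 + γ * m) + K * ((∫ ω, g t ω ∂P) - m) := by
      intro t ht
      have hKint : Integrable (fun ω => K * (g t ω - m)) P := by
        have : Integrable (fun ω => g t ω - m) P := (hIg t ht).sub (integrable_const m)
        exact this.const_mul K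
      have hint2 : Integrable (fun ω => (1/2) * Real.logb 2 (1 + γ * m) + K * (g t ω - m)) P :=
        (integrable_const _).add hKint
      have hmono := integral_mono (hfint t ht) hint2
        (fun ω => by dsimp only; rw [hKdef]; exact tangent m (g t ω) hm (hg t ht ω).1)
      have hrhs : ∫ ω, ((1/2) * Real.logb 2 (1 + γ * m) + K * (g t ω - m)) ∂P
          = (1/2) * Real.logb 2 (1 + γ * m) + K * ((∫ ω, g t ω ∂P) - m) := by
        rw [integral_add (integrable_const _) hKint,
          integral_const, integral_const_mul,
          integral_sub (hIg t ht) (integrable_const m), integral_const]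
        simp
      linarith [hmono, hrhs.le, hrhs.ge]
    have hsum2 : ∑ t ∈ Finset.Icc 1 n, ∫ ω, (1 / 2) * Real.logb 2 (1 + γ * g t ω) ∂P
        ≤ (n : ℝ) * ((1/2) * Real.logb 2 (1 + γ * m)) := by
      have hA : ∑ t ∈ Finset.Icc 1 n, ∫ ω, (1 / 2) * Real.logb 2 (1 + γ * g t ω) ∂P
          ≤ ∑ t ∈ Finset.Icc 1 n,
              ((1/2) * Real.logb 2 (1 + γ * m) + K * ((∫ ω, g t ω ∂P) - m)) :=
        Finset.sum_le_sum fun t ht' => hper t (Finset.mem_Icc.mp ht').1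
      have hB' : ∑ t ∈ Finset.Icc 1 n,
            ((1/2) * Real.logb 2 (1 + γ * m) + K * ((∫ ω, g t ω ∂P) - m))
          = (n : ℝ) * ((1/2) * Real.logb 2 (1 + γ * m))
            + K * ((∑ t ∈ Finset.Icc 1 n, ∫ ω, g t ω ∂P) - n * m) := by
        rw [Finset.sum_add_distrib, Finset.sum_const, Nat.card_Icc, ← Finset.mul_sum,
          Finset.sum_sub_distrib, Finset.sum_const, Nat.card_Icc]
        push_cast
        ring
      have hnm : (n : ℝ) * m = n * μ + B := by
        rw [hmdef]; field_simp; try ring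
      have hneg : K * ((∑ t ∈ Finset.Icc 1 n, ∫ ω, g t ω ∂P) - n * m) ≤ 0 := by
        apply mul_nonpos_of_nonneg_of_nonpos hK
        have := hsumI n
        linarith
      rw [hB'] at hA
      linarith [hA, hneg]
    calc (1 / (n : ℝ)) * ∑ t ∈ Finset.Icc 1 n,
          ∫ ω, (1 / 2) * Real.logb 2 (1 + γ * g t ω) ∂P
        ≤ (1 / (n : ℝ)) * ((n : ℝ) * ((1/2) * Real.logb 2 (1 + γ * m))) := by
          apply mul_le_mul_of_nonneg_left hsum2 (by positivity)
      _ = (1/2) * Real.logb 2 (1 + γ * m) := by field_simp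
  -- pass to the liminf
  set a : ℕ → ℝ := fun n : ℕ => (1 / (n : ℝ)) * ∑ t ∈ Finset.Icc 1 n,
      ∫ ω, (1 / 2) * Real.logb 2 (1 + γ * g t ω) ∂P with hadef
  set φ : ℕ → ℝ := fun n : ℕ => (1/2) * Real.logb 2 (1 + γ * (μ + B / (n : ℝ))) with hφdef
  have hφ : Tendsto φ atTop (nhds ((1/2) * Real.logb 2 (1 + γ * μ))) := by
    have h1 : Tendsto (fun n : ℕ => μ + B / (n : ℝ)) atTop (nhds μ) := by
      have := tendsto_const_div_atTop_nhds_zero_nat B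
      simpa using tendsto_const_nhds.add this
    have hne : (1:ℝ) + γ * μ ≠ 0 := by nlinarith
    have h2' : ContinuousAt (fun x : ℝ => (1/2) * Real.logb 2 (1 + γ * x)) μ := by
      have heq : (fun x : ℝ => (1/2) * Real.logb 2 (1 + γ * x))
          = fun x : ℝ => (1/2) * (Real.log (1 + γ * x) / Real.log 2) := by
        funext x; rw [Real.logb]
      rw [heq]
      have hinner : ContinuousAt (fun x : ℝ => 1 + γ * x) μ := by fun_prop
      have hlog : ContinuousAt (fun x : ℝ => Real.log (1 + γ * x)) μ := by
        exact ContinuousAt.comp (f := fun x : ℝ => 1 + γ * x) (g := Real.log)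
          (Real.continuousAt_log hne) hinner
      exact continuousAt_const.mul (hlog.div_const _)
    exact h2'.tendsto.comp h1
  have hle : ∀ᶠ n in atTop, a n ≤ φ n :=
    eventually_atTop.2 ⟨1, fun n hn => hbound n hn⟩
  have hann : ∀ n, 0 ≤ a n := by
    intro n
    apply mul_nonneg (by positivity)
    apply Finset.sum_nonneg
    intro t ht'
    have ht := (Finset.mem_Icc.mp ht').1
    apply integral_nonneg
    intro ω
    have h1 : (1:ℝ) ≤ 1 + γ * g t ω := by nlinarith [(hg t ht ω).1]
    have := Real.logb_nonneg one_lt_two h1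
    simp only [Pi.zero_apply]
    linarith
  have hbdd : IsBoundedUnder (· ≥ ·) atTop a :=
    isBoundedUnder_of ⟨0, fun n => hann n⟩
  have hlim : liminf a atTop ≤ liminf φ atTop :=
    liminf_le_liminf hle hbdd hφ.isBoundedUnder_le.isCoboundedUnder_ge
  rw [hφ.liminf_eq] at hlim
  rw [hr]
  exact hlim
end

section
/- For all real numbers 0 < p < 1, γ > 0, and B̄ > 0, the series ∑_{i=1}^∞ p·(1−p)^{i−1}·½·log₂(1 + γ·B̄·p·(1−p)^{i−1}) is at least ½·log₂(1 + γ·p·B̄) − ((1−p)/(2p))·log₂(1/(1−p)). -/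
/-- **Series lower bound for the additive-gap analysis.** For `0 < p < 1`, `γ > 0`,
`B > 0`, the series `∑_{i=1}^∞ p (1-p)^{i-1} ½ log₂(1 + γ B p (1-p)^{i-1})`
(indexed below by `i : ℕ` starting at `0`) is at least
`½ log₂(1 + γ p B) - ((1-p)/(2p)) log₂(1/(1-p))`. -/
theorem stmt_3 (p γ B : ℝ) (hp0 : 0 < p) (hp1 : p < 1) (hγ : 0 < γ) (hB : 0 < B) :
    (1 / 2) * Real.logb 2 (1 + γ * p * B)
        - ((1 - p) / (2 * p)) * Real.logb 2 (1 / (1 - p))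
      ≤ ∑' i : ℕ, p * (1 - p) ^ i * ((1 / 2) * Real.logb 2 (1 + γ * B * p * (1 - p) ^ i)) := by
  set q : ℝ := 1 - p with hq
  have hq0 : 0 < q := by simp [hq]; linarith
  have hq1 : q < 1 := by simp [hq]; linarith
  have hqn : ‖q‖ < 1 := by rw [Real.norm_eq_abs, abs_of_pos hq0]; exact hq1
  set L : ℝ := Real.logb 2 (1 + γ * B * p) with hL
  set M : ℝ := Real.logb 2 q with hM
  set g : ℕ → ℝ := fun i => (p * ((1/2) * L)) * q ^ i + (p * ((1/2) * M)) * ((i : ℝ) * q ^ i)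
    with hg
  set f : ℕ → ℝ := fun i => p * q ^ i * ((1 / 2) * Real.logb 2 (1 + γ * B * p * q ^ i)) with hf
  have hpos : ∀ i : ℕ, 0 < 1 + γ * B * p * q ^ i := fun i => by
    have : 0 < γ * B * p * q ^ i := by positivity
    linarith
  -- summability of f
  have hsum_geo : Summable (fun i : ℕ => q ^ i) := summable_geometric_of_lt_one hq0.le hq1
  have hsumf : Summable f := by
    apply Summable.of_nonneg_of_le (f := fun i => (p * ((1/2) * L)) * q ^ i)
    · intro i
      have h1 : 0 ≤ Real.logb 2 (1 + γ * B * p * q ^ i) := by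
        apply Real.logb_nonneg one_lt_two
        have : 0 ≤ γ * B * p * q ^ i := by positivity
        linarith
      have : 0 ≤ q ^ i := by positivity
      simp only [hf]; positivity
    · intro i
      simp only [hf]
      have hle : Real.logb 2 (1 + γ * B * p * q ^ i) ≤ L := by
        apply Real.logb_le_logb_of_le one_lt_two (hpos i)
        have hqi : q ^ i ≤ 1 := pow_le_one₀ hq0.le hq1.le
        nlinarith [mul_pos (mul_pos hγ hB) hp0]
      have hqi : (0:ℝ) ≤ q ^ i := by positivity
      calc p * q ^ i * (1 / 2 * Real.logb 2 (1 + γ * B * p * q ^ i))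
          ≤ p * q ^ i * (1 / 2 * L) := by
            apply mul_le_mul_of_nonneg_left _ (by positivity)
            linarith
        _ = p * (1/2 * L) * q ^ i := by ring
    · exact hsum_geo.mul_left _
  have hsum_ng : Summable (fun i : ℕ => (i : ℝ) * q ^ i) := by
    simpa using summable_pow_mul_geometric_of_norm_lt_one (R := ℝ) 1 hqn
  have hsumg : Summable g := ((hsum_geo.mul_left _).add (hsum_ng.mul_left _))
  -- pointwise bound g ≤ f
  have hgf : ∀ i : ℕ, g i ≤ f i := by
    intro i
    have hqi : (0:ℝ) < q ^ i := by positivity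
    have key : L + (i : ℝ) * M ≤ Real.logb 2 (1 + γ * B * p * q ^ i) := by
      have h1 : Real.logb 2 ((1 + γ * B * p) * q ^ i) = L + (i : ℝ) * M := by
        rw [Real.logb_mul (by nlinarith [mul_pos (mul_pos hγ hB) hp0]) (ne_of_gt hqi),
          Real.logb_pow]
      rw [← h1]
      apply Real.logb_le_logb_of_le one_lt_two (by positivity)
      have hqile : q ^ i ≤ 1 := pow_le_one₀ hq0.le hq1.le
      nlinarith [mul_pos (mul_pos hγ hB) hp0]
    have : g i = p * q ^ i * ((1/2) * (L + (i:ℝ) * M)) := by simp only [hg]; ring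
    rw [this]
    simp only [hf]
    apply mul_le_mul_of_nonneg_left _ (by positivity)
    linarith
  have hle : ∑' i, g i ≤ ∑' i, f i := Summable.tsum_le_tsum hgf hsumg hsumf
  -- compute tsum g
  have htg : ∑' i, g i = (1/2) * L + (q / (2 * p)) * M := by
    rw [Summable.tsum_add (hsum_geo.mul_left _) (hsum_ng.mul_left _), tsum_mul_left, tsum_mul_left,
      tsum_geometric_of_lt_one hq0.le hq1, tsum_coe_mul_geometric_of_norm_lt_one hqn]
    have h1 : 1 - q = p := by simp [hq]
    rw [h1]
    field_simp
  have hfinal : (1 / 2) * Real.logb 2 (1 + γ * p * B)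
      - ((1 - p) / (2 * p)) * Real.logb 2 (1 / (1 - p)) = ∑' i, g i := by
    rw [htg]
    have h2 : Real.logb 2 (1 / (1 - p)) = -M := by
      rw [one_div, Real.logb_inv]
    rw [h2]
    have h3 : (1:ℝ) + γ * p * B = 1 + γ * B * p := by ring
    rw [h3, ← hL, ← hq]
    ring
  rw [hfinal]
  exact hle
end

section
/- For all real numbers 0 < p ≤ 1, γ > 0, and B̄ > 0, the series ∑_{i=1}^∞ p·(1−p)^{i−1}·½·log₂(1 + γ·B̄·p·(1−p)^{i−1}) is at least (1/(2−p))·½·log₂(1 + γ·B̄·p), and hence at least (1/2)·½·log₂(1 + γ·p·B̄). -/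
/-- `log₂(1+αx) ≥ α log₂(1+x)` for `0 ≤ α ≤ 1`, `0 ≤ x`. -/
lemma logb_one_add_mul_ge (α x : ℝ) (hα0 : 0 ≤ α) (hα1 : α ≤ 1) (hx : 0 ≤ x) :
    α * Real.logb 2 (1 + x) ≤ Real.logb 2 (1 + α * x) := by
  have h1x : (0:ℝ) < 1 + x := by linarith
  have hbern : (1 + x) ^ α ≤ 1 + α * x :=
    rpow_one_add_le_one_add_mul_self (by linarith) hα0 hα1
  have hpos : (0:ℝ) < (1 + x) ^ α := Real.rpow_pos_of_pos h1x α
  have : Real.log ((1 + x) ^ α) ≤ Real.log (1 + α * x) :=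
    Real.log_le_log hpos hbern
  rw [Real.log_rpow h1x] at this
  have hlog2 : (0:ℝ) < Real.log 2 := Real.log_pos (by norm_num)
  unfold Real.logb
  rw [mul_div_assoc']
  gcongr

/-- **Series lower bound for the multiplicative-gap analysis.** For `0 < p ≤ 1`, `γ > 0`,
`B > 0`, the series `∑_{i=1}^∞ p (1-p)^{i-1} ½ log₂(1 + γ B p (1-p)^{i-1})`
(indexed below by `i : ℕ` starting at `0`) is at least `(1/(2-p)) ½ log₂(1 + γ B p)`,
and hence at least `(1/2) ½ log₂(1 + γ p B)`. -/
theorem stmt_5 (p γ B : ℝ) (hp0 : 0 < p) (hp1 : p ≤ 1) (hγ : 0 < γ) (hB : 0 < B) :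
    (1 / (2 - p)) * ((1 / 2) * Real.logb 2 (1 + γ * B * p))
      ≤ ∑' i : ℕ, p * (1 - p) ^ i * ((1 / 2) * Real.logb 2 (1 + γ * B * p * (1 - p) ^ i)) ∧
    (1 / 2) * ((1 / 2) * Real.logb 2 (1 + γ * p * B))
      ≤ ∑' i : ℕ, p * (1 - p) ^ i * ((1 / 2) * Real.logb 2 (1 + γ * B * p * (1 - p) ^ i)) := by
  set s := γ * B * p with hs
  have hspos : 0 < s := by positivity
  set C := (1 / 2) * Real.logb 2 (1 + s) with hC
  have hCpos : 0 ≤ C := by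
    have : 0 ≤ Real.logb 2 (1 + s) := Real.logb_nonneg (by norm_num) (by linarith)
    positivity
  have hq0 : (0:ℝ) ≤ 1 - p := by linarith
  have hq1 : 1 - p < 1 := by linarith
  have hαi : ∀ i : ℕ, 0 ≤ (1 - p) ^ i ∧ (1 - p) ^ i ≤ 1 := fun i =>
    ⟨pow_nonneg hq0 i, pow_le_one₀ hq0 (by linarith)⟩
  -- pointwise lower bound
  have hpt : ∀ i : ℕ, p * ((1 - p) ^ 2) ^ i * C
      ≤ p * (1 - p) ^ i * ((1 / 2) * Real.logb 2 (1 + s * (1 - p) ^ i)) := by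
    intro i
    obtain ⟨h0, h1⟩ := hαi i
    have key := logb_one_add_mul_ge ((1 - p) ^ i) s h0 h1 hspos.le
    have hpow : ((1 - p) ^ 2) ^ i = (1 - p) ^ i * (1 - p) ^ i := by
      rw [← pow_mul, two_mul, pow_add]
    have heq : p * ((1 - p) ^ 2) ^ i * C = (p * (1 - p) ^ i * (1/2)) * ((1 - p) ^ i * Real.logb 2 (1 + s)) := by
      rw [hC, hpow]; ring
    rw [heq]
    rw [mul_comm ((1 - p) ^ i) s] at key
    have h2 : (0:ℝ) ≤ p * (1 - p) ^ i * (1/2) := by positivity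
    calc (p * (1 - p) ^ i * (1/2)) * ((1 - p) ^ i * Real.logb 2 (1 + s))
        ≤ (p * (1 - p) ^ i * (1/2)) * Real.logb 2 (1 + s * (1 - p) ^ i) :=
          mul_le_mul_of_nonneg_left key h2
      _ = p * (1 - p) ^ i * ((1 / 2) * Real.logb 2 (1 + s * (1 - p) ^ i)) := by ring_nf
  -- upper bound for summability
  have hub : ∀ i : ℕ, p * (1 - p) ^ i * ((1 / 2) * Real.logb 2 (1 + s * (1 - p) ^ i))
      ≤ p * (1 - p) ^ i * C := by
    intro i
    obtain ⟨h0, h1⟩ := hαi i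
    have h2 : Real.logb 2 (1 + s * (1 - p) ^ i) ≤ Real.logb 2 (1 + s) := by
      apply Real.logb_le_logb_of_le (by norm_num : (1:ℝ) < 2) (by nlinarith)
      nlinarith
    have h3 : (0:ℝ) ≤ p * (1 - p) ^ i := by positivity
    rw [hC]; nlinarith
  have hlb0 : ∀ i : ℕ, 0 ≤ p * (1 - p) ^ i * ((1 / 2) * Real.logb 2 (1 + s * (1 - p) ^ i)) := by
    intro i
    obtain ⟨h0, h1⟩ := hαi i
    have : 0 ≤ Real.logb 2 (1 + s * (1 - p) ^ i) :=
      Real.logb_nonneg (by norm_num) (by nlinarith)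
    positivity
  -- summability
  have hgeo : Summable (fun i : ℕ => (1 - p) ^ i) := summable_geometric_of_lt_one hq0 hq1
  have hsum_ub : Summable (fun i : ℕ => p * (1 - p) ^ i * C) := by
    simpa [mul_comm, mul_assoc] using (hgeo.mul_left p).mul_right C
  have hsumf : Summable (fun i : ℕ => p * (1 - p) ^ i * ((1 / 2) * Real.logb 2 (1 + s * (1 - p) ^ i))) :=
    Summable.of_nonneg_of_le hlb0 hub hsum_ub
  have hgeo2 : Summable (fun i : ℕ => ((1 - p) ^ 2) ^ i) := by
    apply summable_geometric_of_lt_one (by positivity)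
    nlinarith
  have hsumg : Summable (fun i : ℕ => p * ((1 - p) ^ 2) ^ i * C) := by
    simpa [mul_comm, mul_assoc] using (hgeo2.mul_left p).mul_right C
  have htsum_le := Summable.tsum_le_tsum hpt hsumg hsumf
  have htsumg : ∑' i : ℕ, p * ((1 - p) ^ 2) ^ i * C = (1 / (2 - p)) * C := by
    rw [show (fun i : ℕ => p * ((1 - p) ^ 2) ^ i * C) = fun i : ℕ => (p * C) * ((1 - p) ^ 2) ^ i by
      funext i; ring]
    rw [tsum_mul_left, tsum_geometric_of_lt_one (by positivity) (by nlinarith)]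
    have h2p : 2 - p ≠ 0 := by linarith
    have hden : 1 - (1 - p) ^ 2 = p * (2 - p) := by ring
    rw [hden]
    field_simp
  have hmain : (1 / (2 - p)) * C
      ≤ ∑' i : ℕ, p * (1 - p) ^ i * ((1 / 2) * Real.logb 2 (1 + s * (1 - p) ^ i)) := by
    rw [← htsumg]; exact htsum_le
  constructor
  · exact hmain
  · have h12 : (1 / 2 : ℝ) * C ≤ (1 / (2 - p)) * C := by
      apply mul_le_mul_of_nonneg_right _ hCpos
      rw [div_le_div_iff₀ (by norm_num) (by linarith)]
      linarith
    have hrw : (1 : ℝ) + γ * p * B = 1 + s := by rw [hs]; ring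
    rw [hrw]
    exact h12.trans hmain
end

section
/- Let 0 < p < 1, B̄ > 0, γ > 0, and let (E_t)_{t≥1} be i.i.d. random variables with P(E_t = B̄) = p and P(E_t = 0) = 1−p. Define the battery process b_1 = B̄ and b_{t+1} = min{(1−p)·b_t + E_{t+1}, B̄}, and the fixed fraction policy g_t = p·b_t. Then liminf_{n→∞} (1/n)∑_{t=1}^n E[½·log₂(1 + γ·g_t)] ≥ ½·log₂(1 + γ·p·B̄) − 1/(2·ln 2). (Note p·B̄ = E[E_1].) -/
open MeasureTheory ProbabilityTheory Filter Finset

/-- **Additive gap of the fixed fraction policy under Bernoulli arrivals.** For i.i.d.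
arrivals with `P(E t = B) = p`, `P(E t = 0) = 1 - p`, battery `b 1 = B`,
`b (t+1) = min ((1-p) b t + E (t+1)) B`, and fixed fraction policy `g t = p * b t`, the
long-term average throughput satisfies
`liminf_n (1/n) ∑_{t=1}^n 𝔼[½ log₂(1 + γ p b t)] ≥ ½ log₂(1 + γ p B) - 1/(2 ln 2)`. -/
theorem stmt_6 {Ω : Type*} [MeasurableSpace Ω] (P : Measure Ω) [IsProbabilityMeasure P]
    (p B γ : ℝ) (hp0 : 0 < p) (hp1 : p < 1) (hB : 0 < B) (hγ : 0 < γ)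
    (E : ℕ → Ω → ℝ) (hEmeas : ∀ t, Measurable (E t))
    (hindep : iIndepFun E P)
    (hbern : ∀ t, 1 ≤ t → P {ω | E t ω = B} = ENNReal.ofReal p ∧
      P {ω | E t ω = 0} = ENNReal.ofReal (1 - p))
    (b g : ℕ → Ω → ℝ)
    (hb1 : ∀ ω, b 1 ω = B)
    (hbrec : ∀ t, 1 ≤ t → ∀ ω, b (t + 1) ω = min ((1 - p) * b t ω + E (t + 1) ω) B)
    (hg : ∀ t, 1 ≤ t → ∀ ω, g t ω = p * b t ω) :
    (1 / 2) * Real.logb 2 (1 + γ * p * B) - 1 / (2 * Real.log 2)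
      ≤ liminf (fun n : ℕ => (1 / (n : ℝ)) * ∑ t ∈ Finset.Icc 1 n,
          ∫ ω, (1 / 2) * Real.logb 2 (1 + γ * g t ω) ∂P) atTop := by
  classical
  have hq : (0:ℝ) < 1 - p := by linarith
  have hlog2 : (0:ℝ) < Real.log 2 := Real.log_pos one_lt_two
  -- a.e., E t takes values in {0, B}
  have hEae : ∀ t, 1 ≤ t → ∀ᵐ ω ∂P, E t ω = 0 ∨ E t ω = B := by
    intro t ht
    obtain ⟨hPB, hP0⟩ := hbern t ht
    have hm0 : MeasurableSet {ω | E t ω = 0} := hEmeas t (measurableSet_singleton 0)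
    have hmB : MeasurableSet {ω | E t ω = B} := hEmeas t (measurableSet_singleton B)
    have hdisj : Disjoint {ω | E t ω = 0} {ω | E t ω = B} := by
      rw [Set.disjoint_left]
      intro ω h1 h2
      simp only [Set.mem_setOf_eq] at h1 h2
      rw [h1] at h2
      exact hB.ne' h2.symm
    have hU : P ({ω | E t ω = 0} ∪ {ω | E t ω = B}) = 1 := by
      rw [measure_union hdisj hmB, hP0, hPB,
        ← ENNReal.ofReal_add (by linarith) (by linarith)]
      norm_num
    rw [ae_iff]
    have hset : {ω | ¬(E t ω = 0 ∨ E t ω = B)}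
        = ({ω | E t ω = 0} ∪ {ω | E t ω = B})ᶜ := by
      ext ω; simp [not_or]
    rw [hset, measure_compl (hm0.union hmB) (measure_ne_top _ _), hU, measure_univ, tsub_self]
  -- measurability of b t
  have hbmeas : ∀ t, 1 ≤ t → Measurable (b t) := by
    intro t ht
    induction t, ht using Nat.le_induction with
    | base =>
      have h : b 1 = fun _ => B := funext hb1
      rw [h]; exact measurable_const
    | succ t ht ih =>
      have h : b (t+1) = fun ω => min ((1 - p) * b t ω + E (t + 1) ω) B :=
        funext (hbrec t ht)
      rw [h]
      exact ((measurable_const.mul ih).add (hEmeas (t+1))).min measurable_const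
  -- a.e. bounds on b t
  have hbd : ∀ t, 1 ≤ t → ∀ᵐ ω ∂P, (1 - p)^(t-1) * B ≤ b t ω ∧ b t ω ≤ B := by
    intro t ht
    induction t, ht using Nat.le_induction with
    | base =>
      filter_upwards with ω
      rw [hb1]; norm_num
    | succ t ht ih =>
      filter_upwards [ih, hEae (t+1) (by omega)] with ω hω hE
      obtain ⟨hlo, hhi⟩ := hω
      have hbpos : 0 < b t ω := lt_of_lt_of_le (by positivity) hlo
      rw [hbrec t ht ω]
      have ht' : t - 1 + 1 = t := Nat.succ_pred_eq_of_pos ht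
      rcases hE with h0 | hBB
      · rw [h0, add_zero]
        have h1 : (1 - p) * b t ω ≤ B := by nlinarith
        rw [min_eq_left h1]
        refine ⟨?_, h1⟩
        have hpow : (1-p)^t = (1-p)^(t-1) * (1-p) := by
          conv_lhs => rw [← ht']
          rw [pow_succ]
        calc (1-p)^(t+1-1) * B = (1-p)^(t-1) * B * (1-p) := by
              rw [Nat.add_sub_cancel, hpow]; ring
          _ ≤ b t ω * (1-p) := mul_le_mul_of_nonneg_right hlo hq.le
          _ = (1-p) * b t ω := by ring
      · rw [hBB]
        have h2 : B ≤ (1 - p) * b t ω + B := by nlinarith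
        rw [min_eq_right h2]
        refine ⟨?_, le_rfl⟩
        calc (1-p)^(t+1-1) * B ≤ 1 * B := by
              refine mul_le_mul_of_nonneg_right ?_ hB.le
              exact pow_le_one₀ hq.le (by linarith)
          _ = B := one_mul B
  -- independence of b t and E (t+1)
  set ms : ℕ → MeasurableSpace Ω := fun i => MeasurableSpace.comap (E i) inferInstance with hms
  have hms_le : ∀ i, ms i ≤ ‹MeasurableSpace Ω› := fun i => (hEmeas i).comap_le
  have hiIndep : iIndep ms P := (iIndepFun_iff_iIndep _ _ _).mp hindep
  have hbcm : ∀ t, 1 ≤ t → Measurable[⨆ i ∈ Set.Iic t, ms i] (b t) := by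
    intro t ht
    induction t, ht using Nat.le_induction with
    | base =>
      have h : b 1 = fun _ => B := funext hb1
      rw [h]; exact measurable_const
    | succ t ht ih =>
      have hE' : Measurable[⨆ i ∈ Set.Iic (t+1), ms i] (E (t+1)) := by
        have h1 : Measurable[ms (t+1)] (E (t+1)) := Measurable.of_comap_le le_rfl
        exact h1.mono (le_biSup ms (Set.mem_Iic.mpr le_rfl)) le_rfl
      have hb' : Measurable[⨆ i ∈ Set.Iic (t+1), ms i] (b t) :=
        ih.mono (biSup_mono fun i (hi : i ≤ t) => hi.trans (Nat.le_succ t)) le_rfl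
      have h : b (t+1) = fun ω => min ((1 - p) * b t ω + E (t + 1) ω) B :=
        funext (hbrec t ht)
      rw [h]
      exact ((measurable_const.mul hb').add hE').min measurable_const
  have hbE : ∀ t, 1 ≤ t → IndepFun (b t) (E (t+1)) P := by
    intro t ht
    rw [IndepFun_iff_Indep]
    have hindep2 : Indep (⨆ i ∈ Set.Iic t, ms i) (⨆ i ∈ (Set.Iic t)ᶜ, ms i) P :=
      indep_biSup_compl hms_le hiIndep _
    have h1 : MeasurableSpace.comap (b t) inferInstance ≤ ⨆ i ∈ Set.Iic t, ms i :=
      (hbcm t ht).comap_le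
    have h2 : MeasurableSpace.comap (E (t+1)) inferInstance ≤ ⨆ i ∈ (Set.Iic t)ᶜ, ms i :=
      le_biSup ms (by simp)
    exact indep_of_indep_of_le_right (indep_of_indep_of_le_left hindep2 h1) h2
  -- integrability of log (b t / B)
  have hXmeas : ∀ t, 1 ≤ t → Measurable (fun ω => Real.log (b t ω / B)) := by
    intro t ht
    exact Real.measurable_log.comp ((hbmeas t ht).div_const B)
  have hXint : ∀ t, 1 ≤ t → Integrable (fun ω => Real.log (b t ω / B)) P := by
    intro t ht
    refine Integrable.mono' (integrable_const (|Real.log ((1-p)^(t-1))|))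
      (hXmeas t ht).aestronglyMeasurable ?_
    filter_upwards [hbd t ht] with ω hω
    obtain ⟨hlo, hhi⟩ := hω
    have hbpos : 0 < b t ω := lt_of_lt_of_le (by positivity) hlo
    have h1 : Real.log ((1-p)^(t-1)) ≤ Real.log (b t ω / B) :=
      Real.log_le_log (by positivity) ((le_div_iff₀ hB).mpr hlo)
    have h2 : Real.log (b t ω / B) ≤ 0 :=
      Real.log_nonpos (by positivity) ((div_le_one hB).mpr hhi)
    rw [Real.norm_eq_abs]
    calc |Real.log (b t ω / B)| = -(Real.log (b t ω / B)) := abs_of_nonpos h2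
      _ ≤ -(Real.log ((1-p)^(t-1))) := neg_le_neg h1
      _ ≤ |Real.log ((1-p)^(t-1))| := neg_le_abs _
  -- key recursion: ∫ log (b t / B) ≥ -1
  have hkey : ∀ t, 1 ≤ t → (-1 : ℝ) ≤ ∫ ω, Real.log (b t ω / B) ∂P := by
    intro t ht
    induction t, ht using Nat.le_induction with
    | base =>
      have h : (fun ω => Real.log (b 1 ω / B)) = fun _ => (0:ℝ) := by
        funext ω; rw [hb1, div_self hB.ne', Real.log_one]
      rw [h, integral_zero]; norm_num
    | succ t ht ih =>
      set ind : Ω → ℝ := fun ω => if E (t+1) ω = 0 then 1 else 0 with hinddef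
      have hSmeas : MeasurableSet (E (t+1) ⁻¹' {0}) :=
        hEmeas (t+1) (measurableSet_singleton 0)
      have hindicator : ind = Set.indicator (E (t+1) ⁻¹' {0}) (fun _ => (1:ℝ)) := by
        funext ω
        by_cases h : E (t+1) ω = 0 <;> simp [hinddef, h, Set.indicator]
      have hIndInt : Integrable ind P := by
        rw [hindicator]
        exact (integrable_const (1:ℝ)).indicator hSmeas
      have hIind : ∫ ω, ind ω ∂P = 1 - p := by
        have h0 : P (E (t+1) ⁻¹' {0}) = ENNReal.ofReal (1 - p) := (hbern (t+1) (by omega)).2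
        rw [hindicator]
        rw [MeasureTheory.integral_indicator_const (1:ℝ) hSmeas, measureReal_def, h0, smul_eq_mul, mul_one,
          ENNReal.toReal_ofReal hq.le]
      have hφ : Measurable (fun x : ℝ => if x = 0 then (1:ℝ) else 0) :=
        Measurable.ite (measurableSet_eq) measurable_const measurable_const
      have hψ : Measurable (fun x : ℝ => Real.log (x / B)) :=
        Real.measurable_log.comp (measurable_id.div_const B)
      have hindX : IndepFun (fun ω => Real.log (b t ω / B)) ind P := (hbE t ht).comp hψ hφ
      have hmulint : Integrable (fun ω => Real.log (b t ω / B) * ind ω) P :=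
        hindX.integrable_mul (hXint t ht) hIndInt
      have haeeq : (fun ω => Real.log (b (t+1) ω / B))
          =ᵐ[P] fun ω => ind ω * (Real.log (1-p) + Real.log (b t ω / B)) := by
        filter_upwards [hEae (t+1) (by omega), hbd t ht] with ω hE hω
        obtain ⟨hlo, hhi⟩ := hω
        have hbpos : 0 < b t ω := lt_of_lt_of_le (by positivity) hlo
        rcases hE with h0 | hBB
        · have hval : b (t+1) ω = (1-p) * b t ω := by
            rw [hbrec t ht ω, h0, add_zero, min_eq_left (by nlinarith)]
          simp only [hinddef, if_pos h0, one_mul, hval]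
          rw [mul_div_assoc, Real.log_mul hq.ne' (by positivity)]
        · have hval : b (t+1) ω = B := by
            rw [hbrec t ht ω, hBB, min_eq_right (by nlinarith)]
          have hne : ¬ (E (t+1) ω = 0) := by rw [hBB]; exact hB.ne'
          simp only [hinddef, if_neg hne, zero_mul, hval, div_self hB.ne', Real.log_one]
      have hrec : ∫ ω, Real.log (b (t+1) ω / B) ∂P
          = (1-p) * Real.log (1-p) + (1-p) * ∫ ω, Real.log (b t ω / B) ∂P := by
        rw [integral_congr_ae haeeq]
        have h : (fun ω => ind ω * (Real.log (1-p) + Real.log (b t ω / B)))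
            = fun ω => Real.log (1-p) * ind ω + Real.log (b t ω / B) * ind ω := by
          funext ω; ring
        have hmul : ∫ ω, Real.log (b t ω / B) * ind ω ∂P
            = (∫ ω, Real.log (b t ω / B) ∂P) * (1 - p) := by
          rw [← hIind]
          exact hindX.integral_fun_mul_eq_mul_integral (hXint t ht).aestronglyMeasurable
            hIndInt.aestronglyMeasurable
        rw [h, integral_add (hIndInt.const_mul _) hmulint, MeasureTheory.integral_const_mul,
          hmul, hIind]
        ring
      rw [hrec]
      have h1 : Real.log ((1-p)⁻¹) ≤ (1-p)⁻¹ - 1 := Real.log_le_sub_one_of_pos (by positivity)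
      rw [Real.log_inv] at h1
      have h2 : (1-p) * (-(Real.log (1-p))) ≤ (1-p) * ((1-p)⁻¹ - 1) :=
        mul_le_mul_of_nonneg_left h1 hq.le
      have h3 : (1-p) * ((1-p)⁻¹ - 1) = p := by field_simp; ring
      have h4 : (1-p) * (-1:ℝ) ≤ (1-p) * ∫ ω, Real.log (b t ω / B) ∂P :=
        mul_le_mul_of_nonneg_left ih hq.le
      nlinarith
  -- per-term bound
  set c : ℝ := (1 / 2) * Real.logb 2 (1 + γ * p * B) with hc
  set d : ℝ := 1 / (2 * Real.log 2) with hd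
  have hd0 : 0 ≤ d := by positivity
  have hFmeas : ∀ t, 1 ≤ t →
      Measurable (fun ω => (1/2) * Real.logb 2 (1 + γ * (p * b t ω))) := by
    intro t ht
    simp only [← Real.log_div_log]
    exact measurable_const.mul ((Real.measurable_log.comp
      (measurable_const.add (((hbmeas t ht).const_mul p).const_mul γ))).div_const _)
  have hFbd : ∀ t, 1 ≤ t → ∀ᵐ ω ∂P,
      0 ≤ (1/2) * Real.logb 2 (1 + γ * (p * b t ω)) ∧
      (1/2) * Real.logb 2 (1 + γ * (p * b t ω)) ≤ c := by
    intro t ht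
    filter_upwards [hbd t ht] with ω hω
    obtain ⟨hlo, hhi⟩ := hω
    have hbpos : 0 < b t ω := lt_of_lt_of_le (by positivity) hlo
    have hpos1 : (0:ℝ) < γ * (p * b t ω) := by positivity
    have hpos2 : γ * (p * b t ω) ≤ γ * (p * B) := by
      have : p * b t ω ≤ p * B := mul_le_mul_of_nonneg_left hhi hp0.le
      exact mul_le_mul_of_nonneg_left this hγ.le
    constructor
    · have := Real.logb_nonneg (b := 2) one_lt_two (x := 1 + γ * (p * b t ω)) (by linarith)
      linarith
    · rw [hc, mul_assoc γ p B]
      have := Real.logb_le_logb_of_le (b := 2) one_lt_two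
        (x := 1 + γ * (p * b t ω)) (by linarith) (y := 1 + γ * (p * B)) (by linarith)
      linarith
  have hFint : ∀ t, 1 ≤ t →
      Integrable (fun ω => (1/2) * Real.logb 2 (1 + γ * (p * b t ω))) P := by
    intro t ht
    refine Integrable.mono' (integrable_const c) (hFmeas t ht).aestronglyMeasurable ?_
    filter_upwards [hFbd t ht] with ω hω
    rw [Real.norm_eq_abs, abs_of_nonneg hω.1]; exact hω.2
  have hterm : ∀ t, 1 ≤ t →
      c - d ≤ ∫ ω, (1 / 2) * Real.logb 2 (1 + γ * g t ω) ∂P := by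
    intro t ht
    have hgid : (fun ω => (1 / 2) * Real.logb 2 (1 + γ * g t ω))
        = fun ω => (1/2) * Real.logb 2 (1 + γ * (p * b t ω)) := by
      funext ω; rw [hg t ht ω]
    rw [hgid]
    have hptw : ∀ᵐ ω ∂P, c + d * Real.log (b t ω / B)
        ≤ (1/2) * Real.logb 2 (1 + γ * (p * b t ω)) := by
      filter_upwards [hbd t ht] with ω hω
      obtain ⟨hlo, hhi⟩ := hω
      have hbpos : 0 < b t ω := lt_of_lt_of_le (by positivity) hlo
      have hcore : Real.log (1 + γ * (p * B)) + Real.log (b t ω / B)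
          ≤ Real.log (1 + γ * (p * b t ω)) := by
        rw [← Real.log_mul (by positivity) (by positivity)]
        apply Real.log_le_log (by positivity)
        have hx1 : b t ω / B ≤ 1 := (div_le_one hB).mpr hhi
        have heq : (1 + γ * (p * B)) * (b t ω / B) = b t ω / B + γ * (p * b t ω) := by
          field_simp
        rw [heq]; nlinarith
      have h2 : (0:ℝ) < 2 * Real.log 2 := by positivity
      have hq2 : (Real.log (1 + γ * (p * B)) + Real.log (b t ω / B)) / (2 * Real.log 2)
          ≤ Real.log (1 + γ * (p * b t ω)) / (2 * Real.log 2) := by gcongr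
      rw [hc, hd, mul_assoc γ p B]
      simp only [← Real.log_div_log]
      have e1 : (1:ℝ)/2 * (Real.log (1 + γ * (p * B)) / Real.log 2)
            + 1/(2*Real.log 2) * Real.log (b t ω / B)
          = (Real.log (1 + γ * (p * B)) + Real.log (b t ω / B)) / (2 * Real.log 2) := by
        field_simp
      have e2 : (1:ℝ)/2 * (Real.log (1 + γ * (p * b t ω)) / Real.log 2)
          = Real.log (1 + γ * (p * b t ω)) / (2 * Real.log 2) := by
        field_simp
      rw [e1, e2]
      exact hq2
    have hint2 : Integrable (fun ω => c + d * Real.log (b t ω / B)) P :=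
      (integrable_const c).add ((hXint t ht).const_mul d)
    have hmono := integral_mono_ae hint2 (hFint t ht) hptw
    rw [integral_add (integrable_const c) ((hXint t ht).const_mul d), integral_const,
      MeasureTheory.integral_const_mul, probReal_univ, smul_eq_mul, one_mul] at hmono
    have h5 : d * (-1 : ℝ) ≤ d * ∫ ω, Real.log (b t ω / B) ∂P :=
      mul_le_mul_of_nonneg_left (hkey t ht) hd0
    linarith
  have htermub : ∀ t, 1 ≤ t →
      (∫ ω, (1 / 2) * Real.logb 2 (1 + γ * g t ω) ∂P) ≤ c := by
    intro t ht
    have hgid : (fun ω => (1 / 2) * Real.logb 2 (1 + γ * g t ω))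
        = fun ω => (1/2) * Real.logb 2 (1 + γ * (p * b t ω)) := by
      funext ω; rw [hg t ht ω]
    rw [hgid]
    have hmono := integral_mono_ae (hFint t ht) (integrable_const c)
      ((hFbd t ht).mono fun ω hω => hω.2)
    rwa [integral_const, probReal_univ, one_smul] at hmono
  -- conclude via liminf
  have hc0 : 0 ≤ c := by
    rw [hc]
    have hpos : (0:ℝ) < γ * p * B := by positivity
    have := Real.logb_nonneg (b := 2) one_lt_two (x := 1 + γ * p * B) (by linarith)
    linarith
  have hev : ∀ᶠ n : ℕ in atTop, c - d ≤ (1 / (n : ℝ)) * ∑ t ∈ Finset.Icc 1 n,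
      ∫ ω, (1 / 2) * Real.logb 2 (1 + γ * g t ω) ∂P := by
    filter_upwards [eventually_ge_atTop 1] with n hn
    have hn0 : 0 < n := hn
    have hnpos : (0:ℝ) < (n:ℝ) := by exact_mod_cast hn0
    have hsum : (n:ℝ) * (c - d) ≤ ∑ t ∈ Finset.Icc 1 n,
        ∫ ω, (1 / 2) * Real.logb 2 (1 + γ * g t ω) ∂P := by
      have h := Finset.card_nsmul_le_sum (Finset.Icc 1 n)
        (fun t => ∫ ω, (1 / 2) * Real.logb 2 (1 + γ * g t ω) ∂P) (c - d)
        (fun t ht' => hterm t (Finset.mem_Icc.mp ht').1)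
      simpa [Nat.card_Icc, nsmul_eq_mul] using h
    calc c - d = (1/(n:ℝ)) * ((n:ℝ) * (c - d)) := by field_simp
      _ ≤ _ := mul_le_mul_of_nonneg_left hsum (by positivity)
  have hub : ∀ᶠ n : ℕ in atTop, (1 / (n : ℝ)) * ∑ t ∈ Finset.Icc 1 n,
      (∫ ω, (1 / 2) * Real.logb 2 (1 + γ * g t ω) ∂P) ≤ c := by
    filter_upwards [eventually_ge_atTop 1] with n hn
    have hn0 : 0 < n := hn
    have hnpos : (0:ℝ) < (n:ℝ) := by exact_mod_cast hn0
    have hsum : ∑ t ∈ Finset.Icc 1 n,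
        (∫ ω, (1 / 2) * Real.logb 2 (1 + γ * g t ω) ∂P) ≤ (n:ℝ) * c := by
      have h := Finset.sum_le_card_nsmul (Finset.Icc 1 n)
        (fun t => ∫ ω, (1 / 2) * Real.logb 2 (1 + γ * g t ω) ∂P) c
        (fun t ht' => htermub t (Finset.mem_Icc.mp ht').1)
      simpa [Nat.card_Icc, nsmul_eq_mul] using h
    calc (1/(n:ℝ)) * ∑ t ∈ Finset.Icc 1 n,
          (∫ ω, (1 / 2) * Real.logb 2 (1 + γ * g t ω) ∂P)
        ≤ (1/(n:ℝ)) * ((n:ℝ) * c) := mul_le_mul_of_nonneg_left hsum (by positivity)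
      _ = c := by field_simp
  exact le_liminf_of_le (isCoboundedUnder_ge_of_eventually_le atTop hub) hev
end

section
/- Let 0 < p ≤ 1, B̄ > 0, γ > 0, and let (E_t)_{t≥1} be i.i.d. random variables with P(E_t = B̄) = p and P(E_t = 0) = 1−p. Define the battery process b_1 = B̄ and b_{t+1} = min{(1−p)·b_t + E_{t+1}, B̄}, and the fixed fraction policy g_t = p·b_t. Then liminf_{n→∞} (1/n)∑_{t=1}^n E[½·log₂(1 + γ·g_t)] ≥ (1/2)·½·log₂(1 + γ·p·B̄). -/
open MeasureTheory ProbabilityTheory Filter Finset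

lemma log_concave_aux {a x : ℝ} (ha : 0 ≤ a) (hx : 0 ≤ x) (hx1 : x ≤ 1) :
    x * Real.log (1 + a) ≤ Real.log (1 + a * x) := by
  have h := strictConcaveOn_log_Ioi.concaveOn.2 (x := 1 + a) (y := 1)
    (by simp; linarith) (by simp) hx (sub_nonneg.mpr hx1) (by ring)
  simp only [smul_eq_mul, Real.log_one, mul_zero, add_zero] at h
  have he : x * (1 + a) + (1 - x) * 1 = 1 + a * x := by ring
  rw [he] at h
  linarith

/-- **Multiplicative gap of the fixed fraction policy under Bernoulli arrivals.** -/
theorem stmt_7 {Ω : Type*} [MeasurableSpace Ω] (P : Measure Ω) [IsProbabilityMeasure P]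
    (p B γ : ℝ) (hp0 : 0 < p) (hp1 : p ≤ 1) (hB : 0 < B) (hγ : 0 < γ)
    (E : ℕ → Ω → ℝ) (hEmeas : ∀ t, Measurable (E t))
    (hindep : iIndepFun E P)
    (hbern : ∀ t, 1 ≤ t → P {ω | E t ω = B} = ENNReal.ofReal p ∧
      P {ω | E t ω = 0} = ENNReal.ofReal (1 - p))
    (b g : ℕ → Ω → ℝ)
    (hb1 : ∀ ω, b 1 ω = B)
    (hbrec : ∀ t, 1 ≤ t → ∀ ω, b (t + 1) ω = min ((1 - p) * b t ω + E (t + 1) ω) B)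
    (hg : ∀ t, 1 ≤ t → ∀ ω, g t ω = p * b t ω) :
    (1 / 2) * ((1 / 2) * Real.logb 2 (1 + γ * p * B))
      ≤ liminf (fun n : ℕ => (1 / (n : ℝ)) * ∑ t ∈ Finset.Icc 1 n,
          ∫ ω, (1 / 2) * Real.logb 2 (1 + γ * g t ω) ∂P) atTop := by
  classical
  set r : ℝ := (1 / 2) * Real.logb 2 (1 + γ * p * B) with hr_def
  have hc0 : 0 ≤ γ * p * B := by positivity
  have hlog2 : (0:ℝ) < Real.log 2 := Real.log_pos (by norm_num)
  have hr0 : 0 ≤ r := by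
    have := Real.logb_nonneg (by norm_num : (1:ℝ) < 2) (by linarith : (1:ℝ) ≤ 1 + γ * p * B)
    positivity
  -- the arrival sets
  set A : ℕ → Set Ω := fun t => {ω | E t ω = B} with hA_def
  have hAmeas : ∀ t, MeasurableSet (A t) := fun t => (hEmeas t) (measurableSet_singleton B)
  -- indicator of the arrival set
  set χ : ℕ → Ω → ℝ := fun t => (A t).indicator (fun _ => (1:ℝ)) with hχ_def
  have hχmeas : ∀ t, Measurable (χ t) := fun t => measurable_const.indicator (hAmeas t)
  have hχint : ∀ t, Integrable (χ t) P := fun t => (integrable_const (1:ℝ)).indicator (hAmeas t)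
  have hχ_integral : ∀ t, 1 ≤ t → ∫ ω, χ t ω ∂P = p := by
    intro t ht
    have h1 : ∫ ω, χ t ω ∂P = (P (A t)).toReal := integral_indicator_one (hAmeas t)
    rw [h1, (hbern t ht).1, ENNReal.toReal_ofReal hp0.le]
  have hχ01 : ∀ t ω, χ t ω = 0 ∨ χ t ω = 1 := by
    intro t ω
    by_cases h : ω ∈ A t
    · right; simp [hχ_def, h]
    · left; simp [hχ_def, h]
  -- representation of b t as a measurable function of E 0, ..., E t
  have hrep : ∀ t, 1 ≤ t → ∃ F : ({ i // i ∈ Finset.Iic t } → ℝ) → ℝ,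
      Measurable F ∧ ∀ ω, b t ω = F (fun i => E i ω) := by
    intro t ht
    induction t, ht using Nat.le_induction with
    | base =>
      exact ⟨fun _ => B, measurable_const, fun ω => hb1 ω⟩
    | succ t ht ih =>
      obtain ⟨F, hF, hFb⟩ := ih
      have hsub : ∀ i : { i // i ∈ Finset.Iic t }, (i : ℕ) ∈ Finset.Iic (t + 1) := by
        intro i
        have := Finset.mem_Iic.mp i.2
        exact Finset.mem_Iic.mpr (le_trans this (Nat.le_succ t))
      set key : { i // i ∈ Finset.Iic (t+1) } := ⟨t+1, Finset.mem_Iic.mpr le_rfl⟩ with hkeydef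
      set res : ({ i // i ∈ Finset.Iic (t+1) } → ℝ) → ({ i // i ∈ Finset.Iic t } → ℝ) :=
        fun v i => v ⟨i, hsub i⟩ with hresdef
      have hres : Measurable res :=
        measurable_pi_lambda _ (fun i => measurable_pi_apply _)
      refine ⟨fun v => min ((1 - p) * F (res v) + v key) B, ?_, ?_⟩
      · exact (((hF.comp hres).const_mul (1-p)).add (measurable_pi_apply key)).min
          measurable_const
      · intro ω
        rw [hbrec t ht ω, hFb ω]
  have hbmeas : ∀ t, 1 ≤ t → Measurable (b t) := by
    intro t ht
    obtain ⟨F, hF, hFb⟩ := hrep t ht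
    have : b t = fun ω => F (fun i => E i ω) := funext hFb
    rw [this]
    exact hF.comp (measurable_pi_lambda _ (fun i => hEmeas i))
  -- independence of b t and E (t+1)
  have hbE_indep : ∀ t, 1 ≤ t → IndepFun (b t) (E (t+1)) P := by
    intro t ht
    obtain ⟨F, hF, hFb⟩ := hrep t ht
    have hdisj : Disjoint (Finset.Iic t) ({t+1} : Finset ℕ) := by
      simp [Finset.disjoint_singleton_right]
    have h := hindep.indepFun_finset (Finset.Iic t) {t+1} hdisj hEmeas
    have h2 := h.comp hF
      (measurable_pi_apply (⟨t+1, Finset.mem_singleton_self _⟩ : ({t+1} : Finset ℕ)))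
    have hbF : b t = F ∘ (fun a (i : { i // i ∈ Finset.Iic t }) => E i a) := funext hFb
    rw [hbF]
    exact h2
  have hbχ_indep : ∀ t, 1 ≤ t → IndepFun (b t) (χ (t+1)) P := by
    intro t ht
    have hχcomp : χ (t+1) = (Set.indicator ({B} : Set ℝ) (fun _ => (1:ℝ))) ∘ (E (t+1)) := by
      funext ω
      by_cases h : E (t+1) ω = B
      · simp [hχ_def, hA_def, h, Set.indicator]
      · simp [hχ_def, hA_def, h, Set.indicator]
    rw [hχcomp]
    exact ((hbE_indep t ht).comp measurable_id
      (measurable_const.indicator (measurableSet_singleton B)))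
  -- almost sure dichotomy for arrivals
  have hae : ∀ᵐ ω ∂P, ∀ t, 1 ≤ t → E t ω = B ∨ E t ω = 0 := by
    rw [ae_all_iff]
    intro t
    rcases Nat.eq_zero_or_pos t with h0 | ht
    · filter_upwards with ω h; omega
    · have hZmeas : MeasurableSet {ω | E t ω = 0} := (hEmeas t) (measurableSet_singleton 0)
      have hdisj : Disjoint (A t) {ω | E t ω = 0} := by
        rw [Set.disjoint_left]
        intro ω h1 h2
        simp only [hA_def, Set.mem_setOf_eq] at h1 h2
        rw [h1] at h2; exact absurd h2 hB.ne'
      have hU : P (A t ∪ {ω | E t ω = 0}) = 1 := by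
        rw [measure_union hdisj hZmeas, (hbern t ht).1, (hbern t ht).2,
          ← ENNReal.ofReal_add hp0.le (by linarith)]
        norm_num
      have hcompl : P ((A t ∪ {ω | E t ω = 0})ᶜ) = 0 := by
        rw [measure_compl ((hAmeas t).union hZmeas) (measure_ne_top _ _), hU]
        simp
      filter_upwards [measure_eq_zero_iff_ae_notMem.mp hcompl] with ω hω ht'
      exact or_iff_not_imp_left.mpr (by simpa [hA_def] using hω)
  -- pointwise consequences on the good set
  have hptws : ∀ᵐ ω ∂P, ∀ t, 1 ≤ t →
      (0 ≤ b t ω ∧ b t ω ≤ B) ∧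
      b (t+1) ω = B * χ (t+1) ω + (1-p) * b t ω * (1 - χ (t+1) ω) := by
    filter_upwards [hae] with ω hω
    have hbd : ∀ t, 1 ≤ t → 0 ≤ b t ω ∧ b t ω ≤ B := by
      intro t ht
      induction t, ht using Nat.le_induction with
      | base => rw [hb1 ω]; exact ⟨hB.le, le_rfl⟩
      | succ t ht ih =>
        rw [hbrec t ht ω]
        constructor
        · apply le_min _ hB.le
          rcases hω (t+1) (by omega) with h | h
          · rw [h]; nlinarith [ih.1]
          · rw [h]; nlinarith [ih.1]
        · exact min_le_right _ _
    intro t ht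
    refine ⟨hbd t ht, ?_⟩
    rw [hbrec t ht ω]
    rcases hω (t+1) (by omega) with h | h
    · have hmem : ω ∈ A (t+1) := h
      have hχ1 : χ (t+1) ω = 1 := by simp [hχ_def, Set.indicator_of_mem hmem]
      rw [hχ1, h]
      have : (1-p) * b t ω ≥ 0 := by nlinarith [(hbd t ht).1]
      rw [min_eq_right (by linarith)]
      ring
    · have hnmem : ω ∉ A (t+1) := by
        simp only [hA_def, Set.mem_setOf_eq]
        rw [h]; exact fun hc => hB.ne' hc.symm
      have hχ0 : χ (t+1) ω = 0 := by simp [hχ_def, Set.indicator_of_notMem hnmem]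
      rw [hχ0, h]
      have h1 : (1-p) * b t ω ≤ b t ω := by nlinarith [(hbd t ht).1]
      rw [add_zero, min_eq_left (le_trans h1 (hbd t ht).2)]
      ring
  -- integrability of b t
  have hbint : ∀ t, 1 ≤ t → Integrable (b t) P := by
    intro t ht
    refine Integrable.mono' (integrable_const B) (hbmeas t ht).aestronglyMeasurable ?_
    filter_upwards [hptws] with ω hω
    have := (hω t ht).1
    rw [Real.norm_eq_abs, abs_le]
    exact ⟨by linarith [this.1], this.2⟩
  -- mean recursion
  set m : ℕ → ℝ := fun t => ∫ ω, b t ω ∂P with hm_def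
  have hm_rec : ∀ t, 1 ≤ t → m (t+1) = B * p + (1-p) * m t - (1-p) * (m t * p) := by
    intro t ht
    have hbtχ_int : Integrable (b t * χ (t+1)) P := by
      refine Integrable.mono' (integrable_const B)
        (((hbmeas t ht).mul (hχmeas (t+1))).aestronglyMeasurable) ?_
      filter_upwards [hptws] with ω hω
      have hb := (hω t ht).1
      rcases hχ01 (t+1) ω with h | h <;>
        simp only [Pi.mul_apply, h, mul_zero, mul_one, Real.norm_eq_abs] <;>
        rw [abs_le] <;> constructor <;> linarith [hb.1, hb.2]
    have heq : (fun ω => b (t+1) ω) =ᵐ[P]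
        fun ω => B * χ (t+1) ω + ((1-p) * b t ω - (1-p) * (b t ω * χ (t+1) ω)) := by
      filter_upwards [hptws] with ω hω
      have := (hω t ht).2
      rw [this]; ring
    have hI1 : Integrable (fun ω => B * χ (t+1) ω) P := (hχint (t+1)).const_mul B
    have hI2 : Integrable (fun ω => (1-p) * b t ω) P := (hbint t ht).const_mul (1-p)
    have hI3 : Integrable (fun ω => (1-p) * (b t ω * χ (t+1) ω)) P := hbtχ_int.const_mul (1-p)
    have hmul : ∫ ω, b t ω * χ (t+1) ω ∂P = m t * p := by
      have := (hbχ_indep t ht).integral_mul_eq_mul_integral (hbint t ht).aestronglyMeasurable (hχint (t+1)).aestronglyMeasurable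
      calc ∫ ω, b t ω * χ (t+1) ω ∂P = ∫ ω, (b t * χ (t+1)) ω ∂P := rfl
        _ = (∫ ω, b t ω ∂P) * ∫ ω, χ (t+1) ω ∂P := this
        _ = m t * p := by rw [hχ_integral (t+1) (by omega)]
    calc m (t+1) = ∫ ω, (B * χ (t+1) ω + ((1-p) * b t ω - (1-p) * (b t ω * χ (t+1) ω))) ∂P :=
          integral_congr_ae heq
      _ = (∫ ω, B * χ (t+1) ω ∂P) + ∫ ω, ((1-p) * b t ω - (1-p) * (b t ω * χ (t+1) ω)) ∂P :=
          integral_add hI1 (hI2.sub hI3)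
      _ = (∫ ω, B * χ (t+1) ω ∂P) + ((∫ ω, (1-p) * b t ω ∂P)
            - ∫ ω, (1-p) * (b t ω * χ (t+1) ω) ∂P) := by rw [integral_sub hI2 hI3]
      _ = B * (∫ ω, χ (t+1) ω ∂P) + ((1-p) * (∫ ω, b t ω ∂P)
            - (1-p) * ∫ ω, b t ω * χ (t+1) ω ∂P) := by
          rw [integral_const_mul, integral_const_mul, integral_const_mul]
      _ = B * p + (1-p) * m t - (1-p) * (m t * p) := by
          rw [hχ_integral (t+1) (by omega), hmul]; ring
  have hm1 : m 1 = B := by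
    have : (fun ω => b 1 ω) = fun _ : Ω => B := funext hb1
    simp [hm_def, this]
  have hm_lb : ∀ t, 1 ≤ t → B / 2 ≤ m t := by
    intro t ht
    induction t, ht using Nat.le_induction with
    | base => rw [hm1]; linarith
    | succ t ht ih =>
      rw [hm_rec t ht]
      nlinarith [sq_nonneg (1-p), sq_nonneg p, mul_le_mul_of_nonneg_left ih (sq_nonneg (1-p))]
  -- per-term lower and upper bound on the integrals
  have hI : ∀ t, 1 ≤ t →
      r / 2 ≤ (∫ ω, (1 / 2) * Real.logb 2 (1 + γ * g t ω) ∂P) ∧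
      (∫ ω, (1 / 2) * Real.logb 2 (1 + γ * g t ω) ∂P) ≤ r := by
    intro t ht
    have hgr : (fun ω => (1 / 2) * Real.logb 2 (1 + γ * g t ω))
        = fun ω => (1 / 2) * Real.logb 2 (1 + γ * (p * b t ω)) := by
      funext ω; rw [hg t ht ω]
    rw [hgr]
    set f : Ω → ℝ := fun ω => (1 / 2) * Real.logb 2 (1 + γ * (p * b t ω)) with hf_def
    have hfm : Measurable f := by
      have h1 : Measurable fun ω => 1 + γ * (p * b t ω) :=
        (((hbmeas t ht).const_mul p).const_mul γ).const_add 1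
      simp only [hf_def, Real.logb]
      exact (measurable_const.mul ((Real.measurable_log.comp h1).div_const _))
    have hbound : ∀ᵐ ω ∂P, b t ω * (r / B) ≤ f ω ∧ 0 ≤ f ω ∧ f ω ≤ r := by
      filter_upwards [hptws] with ω hω
      have hb := (hω t ht).1
      have harg1 : (1:ℝ) ≤ 1 + γ * (p * b t ω) := by nlinarith [hb.1]
      have harg2 : 1 + γ * (p * b t ω) ≤ 1 + γ * p * B := by nlinarith [hb.2]
      refine ⟨?_, ?_, ?_⟩
      · -- concavity bound
        have hkey := log_concave_aux (a := γ * p * B) (x := b t ω / B) hc0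
          (div_nonneg hb.1 hB.le) (div_le_one_of_le₀ hb.2 hB.le)
        have hax : γ * p * B * (b t ω / B) = γ * (p * b t ω) := by
          field_simp
        rw [hax] at hkey
        have hpos : (0:ℝ) < 2 * Real.log 2 := by linarith
        calc b t ω * (r / B)
            = (b t ω / B * Real.log (1 + γ * p * B)) / (2 * Real.log 2) := by
              rw [hr_def, Real.logb]; ring
          _ ≤ Real.log (1 + γ * (p * b t ω)) / (2 * Real.log 2) :=
              (div_le_div_iff_of_pos_right hpos).mpr hkey
          _ = f ω := by rw [hf_def]; simp only [Real.logb]; ring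
      · have := Real.log_nonneg harg1
        simp only [hf_def, Real.logb]
        positivity
      · have hll := Real.log_le_log (by linarith) harg2
        have h2 : Real.log (1 + γ * (p * b t ω)) / Real.log 2
            ≤ Real.log (1 + γ * p * B) / Real.log 2 := (div_le_div_iff_of_pos_right hlog2).mpr hll
        simp only [hf_def, hr_def, Real.logb]
        linarith
    -- integrate the bounds
    have hfint : Integrable f P := by
      refine Integrable.mono' (integrable_const r) hfm.aestronglyMeasurable ?_
      filter_upwards [hbound] with ω hω
      rw [Real.norm_eq_abs, abs_le]
      exact ⟨by linarith [hω.2.1], hω.2.2⟩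
    have hlint : Integrable (fun ω => b t ω * (r / B)) P := (hbint t ht).mul_const _
    constructor
    · have h1 : ∫ ω, b t ω * (r / B) ∂P ≤ ∫ ω, f ω ∂P := by
        refine integral_mono_ae hlint hfint ?_
        filter_upwards [hbound] with ω hω using hω.1
      have h2 : ∫ ω, b t ω * (r / B) ∂P = m t * (r / B) := integral_mul_const _ _
      have h3 : B / 2 * (r / B) ≤ m t * (r / B) :=
        mul_le_mul_of_nonneg_right (hm_lb t ht) (by positivity)
      have h4 : B / 2 * (r / B) = r / 2 := by field_simp
      calc r / 2 = B / 2 * (r / B) := h4.symm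
        _ ≤ m t * (r / B) := h3
        _ = ∫ ω, b t ω * (r / B) ∂P := h2.symm
        _ ≤ ∫ ω, f ω ∂P := h1
    · have h1 : ∫ ω, f ω ∂P ≤ ∫ _ω, r ∂P := by
        refine integral_mono_ae hfint (integrable_const r) ?_
        filter_upwards [hbound] with ω hω using hω.2.2
      simpa using h1
  -- conclude via liminf
  have hu : ∀ n : ℕ, 1 ≤ n →
      r / 2 ≤ (1 / (n : ℝ)) * ∑ t ∈ Finset.Icc 1 n,
        (∫ ω, (1 / 2) * Real.logb 2 (1 + γ * g t ω) ∂P) ∧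
      (1 / (n : ℝ)) * ∑ t ∈ Finset.Icc 1 n,
        (∫ ω, (1 / 2) * Real.logb 2 (1 + γ * g t ω) ∂P) ≤ r := by
    intro n hn
    have hn0 : (0:ℝ) < n := by exact_mod_cast hn
    have hcard : (Finset.Icc 1 n).card = n := by rw [Nat.card_Icc]; omega
    have hsum_lb : (n:ℝ) * (r / 2) ≤ ∑ t ∈ Finset.Icc 1 n,
        (∫ ω, (1 / 2) * Real.logb 2 (1 + γ * g t ω) ∂P) := by
      have := Finset.card_nsmul_le_sum (Finset.Icc 1 n)
        (fun t => ∫ ω, (1 / 2) * Real.logb 2 (1 + γ * g t ω) ∂P) (r / 2)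
        (fun t htm => (hI t (Finset.mem_Icc.mp htm).1).1)
      rw [hcard, nsmul_eq_mul] at this
      exact this
    have hsum_ub : (∑ t ∈ Finset.Icc 1 n,
        (∫ ω, (1 / 2) * Real.logb 2 (1 + γ * g t ω) ∂P)) ≤ (n:ℝ) * r := by
      have := Finset.sum_le_card_nsmul (Finset.Icc 1 n)
        (fun t => ∫ ω, (1 / 2) * Real.logb 2 (1 + γ * g t ω) ∂P) r
        (fun t htm => (hI t (Finset.mem_Icc.mp htm).1).2)
      rw [hcard, nsmul_eq_mul] at this
      exact this
    constructor
    · have he : r / 2 = (1/(n:ℝ)) * ((n:ℝ) * (r/2)) := by field_simp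
      rw [he]
      exact mul_le_mul_of_nonneg_left hsum_lb (by positivity)
    · have he : (1/(n:ℝ)) * ((n:ℝ) * r) = r := by field_simp
      calc (1 / (n : ℝ)) * ∑ t ∈ Finset.Icc 1 n,
            (∫ ω, (1 / 2) * Real.logb 2 (1 + γ * g t ω) ∂P)
          ≤ (1/(n:ℝ)) * ((n:ℝ) * r) := mul_le_mul_of_nonneg_left hsum_ub (by positivity)
        _ = r := he
  refine le_liminf_of_le ?_ ?_
  · exact isCoboundedUnder_ge_of_eventually_le atTop
      (eventually_atTop.mpr ⟨1, fun n hn => (hu n hn).2⟩)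
  · refine eventually_atTop.mpr ⟨1, fun n hn => ?_⟩
    have h1 := (hu n hn).1
    have h2 : (1 / 2) * ((1 / 2) * Real.logb 2 (1 + γ * p * B)) = r / 2 := by
      rw [hr_def]; ring
    linarith
end

section
/- Fix B̄ > 0, γ > 0, and a probability measure ν supported on [0, B̄] with mean μ = ∫ e dν(e); set q = μ/B̄. Define the n-horizon value functions of the fixed fraction policy recursively by W_1^ν(x) = ½·log₂(1 + γ·q·x) and n·W_n^ν(x) = ½·log₂(1 + γ·q·x) + (n−1)·∫ W_{n−1}^ν(min{(1−q)·x + e, B̄}) dν(e) for x ∈ [0, B̄]. Let ν̂ be the Bernoulli measure on [0, B̄] with ν̂({B̄}) = q and ν̂({0}) = 1−q (which has the same mean μ). Then for every n ≥ 1 and every x ∈ [0, B̄], W_n^ν(x) ≥ W_n^{ν̂}(x): i.e., among all i.i.d. energy-arrival distributions on [0, B̄] with mean μ, the Bernoulli distribution yields the smallest n-horizon expected throughput under the fixed fraction policy, for every horizon n and every initial battery level x. -/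
open MeasureTheory

/-! Auxiliary development: canonical value functions for the fixed fraction policy. -/

/-- Canonical `n`-horizon value function under arrival distribution `ν`
(with battery argument clamped into `[0, B]` inside the integral). -/
noncomputable def ffpV (B γ q : ℝ) (ν : Measure ℝ) : ℕ → ℝ → ℝ
  | 0 => fun _ => 0
  | n + 1 => fun x => ((1/2) * Real.logb 2 (1 + γ * q * x)
      + (n : ℝ) * ∫ e, ffpV B γ q ν n (max 0 (min ((1 - q) * x + e) B)) ∂ν) / ((n : ℝ) + 1)

/-- Canonical `n`-horizon value function under the Bernoulli arrival distribution. -/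
noncomputable def ffpVb (B γ q : ℝ) : ℕ → ℝ → ℝ
  | 0 => fun _ => 0
  | n + 1 => fun x => ((1/2) * Real.logb 2 (1 + γ * q * x)
      + (n : ℝ) * (q * ffpVb B γ q n B + (1 - q) * ffpVb B γ q n ((1 - q) * x))) / ((n : ℝ) + 1)

lemma ffpV_measurable (B γ q : ℝ) (ν : Measure ℝ) [SFinite ν] (n : ℕ) :
    Measurable (ffpV B γ q ν n) := by
  induction n with
  | zero => simp only [ffpV]; exact measurable_const
  | succ n ih =>
    simp only [ffpV]
    have hclamp : Measurable fun p : ℝ × ℝ => max 0 (min ((1 - q) * p.1 + p.2) B) :=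
      measurable_const.max (((measurable_fst.const_mul (1 - q)).add measurable_snd).min
        measurable_const)
    have hint : StronglyMeasurable fun x : ℝ =>
        ∫ e, ffpV B γ q ν n (max 0 (min ((1 - q) * x + e) B)) ∂ν :=
      (ih.comp hclamp).stronglyMeasurable.integral_prod_right'
    have hlogb : Measurable fun x : ℝ => (1/2) * Real.logb 2 (1 + γ * q * x) := by
      have : Measurable fun x : ℝ => 1 + γ * q * x :=
        (measurable_id.const_mul (γ * q)).const_add 1
      exact ((Real.measurable_log.comp this).div_const (Real.log 2)).const_mul (1/2)
    exact ((hlogb.add (hint.measurable.const_mul _)).div_const _)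

lemma clamp_mem (B q x e : ℝ) (hB : 0 ≤ B) :
    max 0 (min ((1 - q) * x + e) B) ∈ Set.Icc 0 B :=
  ⟨le_max_left _ _, max_le hB (min_le_right _ _)⟩

lemma ffpV_bounds (B γ q : ℝ) (ν : Measure ℝ) [IsProbabilityMeasure ν]
    (hB : 0 < B) (hγq : 0 ≤ γ * q) (n : ℕ) :
    ∀ x ∈ Set.Icc (0:ℝ) B,
      ffpV B γ q ν n x ∈ Set.Icc 0 ((1/2) * Real.logb 2 (1 + γ * q * B)) := by
  set C := (1/2) * Real.logb 2 (1 + γ * q * B) with hC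
  have hC0 : 0 ≤ C := by
    apply mul_nonneg (by norm_num)
    exact Real.logb_nonneg one_lt_two (by nlinarith)
  induction n with
  | zero => intro x hx; simp only [ffpV]; exact ⟨le_refl _, hC0⟩
  | succ n ih =>
    intro x hx
    have hL0 : 0 ≤ (1/2) * Real.logb 2 (1 + γ * q * x) := by
      apply mul_nonneg (by norm_num)
      exact Real.logb_nonneg one_lt_two (by nlinarith [mul_nonneg hγq hx.1])
    have hLC : (1/2) * Real.logb 2 (1 + γ * q * x) ≤ C := by
      rw [hC]
      have h1 : (0:ℝ) < 1 + γ * q * x := by nlinarith [mul_nonneg hγq hx.1]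
      have h2 : 1 + γ * q * x ≤ 1 + γ * q * B := by nlinarith [hx.2]
      have := (Real.logb_le_logb one_lt_two h1 (by linarith)).2 h2
      linarith
    have hptw : ∀ e : ℝ, ffpV B γ q ν n (max 0 (min ((1 - q) * x + e) B)) ∈ Set.Icc 0 C :=
      fun e => ih _ (clamp_mem B q x e hB.le)
    have hint : Integrable (fun e => ffpV B γ q ν n (max 0 (min ((1 - q) * x + e) B))) ν := by
      refine ⟨((ffpV_measurable B γ q ν n).comp
        (measurable_const.max (((measurable_const).add measurable_id).min
          measurable_const))).aestronglyMeasurable, ?_⟩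
      · exact HasFiniteIntegral.of_bounded (C := C) (Filter.Eventually.of_forall fun e => by
          rw [Real.norm_eq_abs, abs_le]
          exact ⟨by linarith [(hptw e).1], (hptw e).2⟩)
    have hI0 : 0 ≤ ∫ e, ffpV B γ q ν n (max 0 (min ((1 - q) * x + e) B)) ∂ν :=
      integral_nonneg fun e => (hptw e).1
    have hIC : (∫ e, ffpV B γ q ν n (max 0 (min ((1 - q) * x + e) B)) ∂ν) ≤ C := by
      calc (∫ e, ffpV B γ q ν n (max 0 (min ((1 - q) * x + e) B)) ∂ν)
          ≤ ∫ _, C ∂ν := integral_mono hint (integrable_const C) fun e => (hptw e).2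
        _ = C := by simp
    have hn1 : (0:ℝ) < (n:ℝ) + 1 := by positivity
    have hn0 : (0:ℝ) ≤ (n:ℝ) := Nat.cast_nonneg n
    simp only [ffpV]
    constructor
    · apply div_nonneg _ hn1.le
      have := mul_nonneg hn0 hI0
      linarith
    · rw [div_le_iff₀ hn1]
      nlinarith [mul_le_mul_of_nonneg_left hIC hn0]

lemma ffpV_clamp_integrable (B γ q : ℝ) (ν : Measure ℝ) [IsProbabilityMeasure ν]
    (hB : 0 < B) (hγq : 0 ≤ γ * q) (n : ℕ) (x : ℝ) :
    Integrable (fun e => ffpV B γ q ν n (max 0 (min ((1 - q) * x + e) B))) ν := by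
  set C := (1/2) * Real.logb 2 (1 + γ * q * B) with hC
  have hC0 : 0 ≤ C := mul_nonneg (by norm_num) (Real.logb_nonneg one_lt_two (by nlinarith))
  have hptw : ∀ e : ℝ, ffpV B γ q ν n (max 0 (min ((1 - q) * x + e) B)) ∈ Set.Icc 0 C :=
    fun e => ffpV_bounds B γ q ν hB hγq n _ (clamp_mem B q x e hB.le)
  refine ⟨((ffpV_measurable B γ q ν n).comp
    (measurable_const.max (((measurable_const).add measurable_id).min
      measurable_const))).aestronglyMeasurable, ?_⟩
  exact HasFiniteIntegral.of_bounded (C := C) (Filter.Eventually.of_forall fun e => by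
    rw [Real.norm_eq_abs, abs_le]
    exact ⟨by linarith [(hptw e).1], (hptw e).2⟩)

lemma L_mono (γ q : ℝ) (hγq : 0 ≤ γ * q) {x y : ℝ} (hx : 0 ≤ x) (hxy : x ≤ y) :
    (1/2) * Real.logb 2 (1 + γ * q * x) ≤ (1/2) * Real.logb 2 (1 + γ * q * y) := by
  have h1 : (0:ℝ) < 1 + γ * q * x := by nlinarith [mul_nonneg hγq hx]
  have h2 : 1 + γ * q * x ≤ 1 + γ * q * y := by nlinarith
  have := (Real.logb_le_logb one_lt_two h1 (by linarith)).2 h2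
  linarith

lemma L_concave (γ q : ℝ) (hγq : 0 ≤ γ * q) {x y a b : ℝ} (hx : 0 ≤ x) (hy : 0 ≤ y)
    (ha : 0 ≤ a) (hb : 0 ≤ b) (hab : a + b = 1) :
    a * ((1/2) * Real.logb 2 (1 + γ * q * x)) + b * ((1/2) * Real.logb 2 (1 + γ * q * y))
      ≤ (1/2) * Real.logb 2 (1 + γ * q * (a * x + b * y)) := by
  have hu : (0:ℝ) < 1 + γ * q * x := by nlinarith [mul_nonneg hγq hx]
  have hv : (0:ℝ) < 1 + γ * q * y := by nlinarith [mul_nonneg hγq hy]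
  have key := strictConcaveOn_log_Ioi.concaveOn.2 (Set.mem_Ioi.2 hu) (Set.mem_Ioi.2 hv)
    ha hb hab
  rw [smul_eq_mul, smul_eq_mul, smul_eq_mul, smul_eq_mul] at key
  have heq : a * (1 + γ * q * x) + b * (1 + γ * q * y) = 1 + γ * q * (a * x + b * y) := by
    have : a * (1 + γ * q * x) + b * (1 + γ * q * y)
        = (a + b) + γ * q * (a * x + b * y) := by ring
    rw [this, hab]
  rw [heq] at key
  have h2 : (0:ℝ) < Real.log 2 := Real.log_pos one_lt_two
  have hc : (0:ℝ) ≤ 1 / (2 * Real.log 2) := by positivity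
  have := mul_le_mul_of_nonneg_left key hc
  calc a * ((1/2) * Real.logb 2 (1 + γ * q * x)) + b * ((1/2) * Real.logb 2 (1 + γ * q * y))
      = 1 / (2 * Real.log 2) * (a * Real.log (1 + γ * q * x) + b * Real.log (1 + γ * q * y)) := by
        simp only [Real.logb]; ring
    _ ≤ 1 / (2 * Real.log 2) * Real.log (1 + γ * q * (a * x + b * y)) := this
    _ = (1/2) * Real.logb 2 (1 + γ * q * (a * x + b * y)) := by
        simp only [Real.logb]; ring

lemma ffpVb_mono (B γ q : ℝ) (hB : 0 < B) (hγq : 0 ≤ γ * q) (hq0 : 0 ≤ q) (hq1 : q ≤ 1)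
    (n : ℕ) : ∀ x y : ℝ, 0 ≤ x → x ≤ y → y ≤ B → ffpVb B γ q n x ≤ ffpVb B γ q n y := by
  induction n with
  | zero => intro x y _ _ _; simp [ffpVb]
  | succ n ih =>
    intro x y hx hxy hyB
    simp only [ffpVb]
    have h1 := L_mono γ q hγq hx hxy
    have h2 : ffpVb B γ q n ((1 - q) * x) ≤ ffpVb B γ q n ((1 - q) * y) := by
      apply ih
      · exact mul_nonneg (by linarith) hx
      · exact mul_le_mul_of_nonneg_left hxy (by linarith)
      · nlinarith
    have hn0 : (0:ℝ) ≤ (n:ℝ) := Nat.cast_nonneg n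
    have hn1 : (0:ℝ) < (n:ℝ) + 1 := by positivity
    apply div_le_div_of_nonneg_right ?_ hn1.le
    nlinarith [mul_nonneg (mul_nonneg hn0 (show (0:ℝ) ≤ 1 - q by linarith))
      (sub_nonneg.2 h2)]

lemma ffpVb_concave (B γ q : ℝ) (hB : 0 < B) (hγq : 0 ≤ γ * q) (hq0 : 0 ≤ q) (hq1 : q ≤ 1)
    (n : ℕ) : ∀ x y a b : ℝ, x ∈ Set.Icc 0 B → y ∈ Set.Icc 0 B → 0 ≤ a → 0 ≤ b → a + b = 1 →
      a * ffpVb B γ q n x + b * ffpVb B γ q n y ≤ ffpVb B γ q n (a * x + b * y) := by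
  induction n with
  | zero => intro x y a b _ _ _ _ _; simp [ffpVb]
  | succ n ih =>
    intro x y a b hx hy ha hb hab
    have h1 := L_concave γ q hγq hx.1 hy.1 ha hb hab
    have h2 : a * ffpVb B γ q n ((1 - q) * x) + b * ffpVb B γ q n ((1 - q) * y)
        ≤ ffpVb B γ q n ((1 - q) * (a * x + b * y)) := by
      have := ih ((1 - q) * x) ((1 - q) * y) a b
        ⟨mul_nonneg (by linarith) hx.1, by nlinarith [hx.2]⟩
        ⟨mul_nonneg (by linarith) hy.1, by nlinarith [hy.2]⟩ ha hb hab
      rwa [show a * ((1 - q) * x) + b * ((1 - q) * y) = (1 - q) * (a * x + b * y) by ring] at this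
    have hn0 : (0:ℝ) ≤ (n:ℝ) := Nat.cast_nonneg n
    have hn1 : (0:ℝ) < (n:ℝ) + 1 := by positivity
    have t1 := mul_nonneg (mul_nonneg hn0 (show (0:ℝ) ≤ 1 - q by linarith))
      (sub_nonneg.2 h2)
    have hab2 : (n:ℝ) * (q * ffpVb B γ q n B) * (a + b) = (n:ℝ) * (q * ffpVb B γ q n B) := by
      rw [hab]; ring
    simp only [ffpVb]
    calc a * ((1/2 * Real.logb 2 (1 + γ * q * x)
            + (n:ℝ) * (q * ffpVb B γ q n B + (1 - q) * ffpVb B γ q n ((1 - q) * x))) / ((n:ℝ) + 1))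
          + b * ((1/2 * Real.logb 2 (1 + γ * q * y)
            + (n:ℝ) * (q * ffpVb B γ q n B + (1 - q) * ffpVb B γ q n ((1 - q) * y))) / ((n:ℝ) + 1))
        = (a * (1/2 * Real.logb 2 (1 + γ * q * x)
            + (n:ℝ) * (q * ffpVb B γ q n B + (1 - q) * ffpVb B γ q n ((1 - q) * x)))
          + b * (1/2 * Real.logb 2 (1 + γ * q * y)
            + (n:ℝ) * (q * ffpVb B γ q n B + (1 - q) * ffpVb B γ q n ((1 - q) * y)))) / ((n:ℝ) + 1) := by
          ring
      _ ≤ (1/2 * Real.logb 2 (1 + γ * q * (a * x + b * y))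
            + (n:ℝ) * (q * ffpVb B γ q n B
              + (1 - q) * ffpVb B γ q n ((1 - q) * (a * x + b * y)))) / ((n:ℝ) + 1) := by
          apply div_le_div_of_nonneg_right ?_ hn1.le
          nlinarith [t1, hab2, h1]

lemma main_ineq (B γ q μ : ℝ) (ν : Measure ℝ) [IsProbabilityMeasure ν]
    (hB : 0 < B) (hγ : 0 < γ) (hq0 : 0 ≤ q) (hq1 : q ≤ 1)
    (hsupp : ∀ᵐ e ∂ν, e ∈ Set.Icc 0 B)
    (hμ : μ = ∫ e, e ∂ν) (hq : q = μ / B) (n : ℕ) :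
    ∀ x ∈ Set.Icc (0:ℝ) B, ffpVb B γ q n x ≤ ffpV B γ q ν n x := by
  have hγq : 0 ≤ γ * q := mul_nonneg hγ.le hq0
  have hIntId : Integrable (fun e : ℝ => e) ν := by
    refine ⟨measurable_id.aestronglyMeasurable, ?_⟩
    exact HasFiniteIntegral.of_bounded (C := B) (by
      filter_upwards [hsupp] with e he
      rw [Real.norm_eq_abs, abs_le]; exact ⟨by linarith [he.1], he.2⟩)
  induction n with
  | zero => intro x _; simp [ffpV, ffpVb]
  | succ n ih =>
    intro x hx
    set x' := (1 - q) * x with hx'def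
    have hx'0 : 0 ≤ x' := mul_nonneg (by linarith) hx.1
    have hx'B : x' ≤ B := by nlinarith [hx.2]
    set g : ℝ → ℝ := fun e =>
      ffpVb B γ q n x' + ((ffpVb B γ q n B - ffpVb B γ q n x') / B) * e with hgdef
    have hgint : Integrable g ν := (integrable_const _).add (hIntId.const_mul _)
    have h_ae : ∀ᵐ e ∂ν, g e ≤ ffpV B γ q ν n (max 0 (min ((1 - q) * x + e) B)) := by
      filter_upwards [hsupp] with e he
      set m := min ((1 - q) * x + e) B with hm
      have hm0 : 0 ≤ m := le_min (by linarith [he.1]) hB.le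
      have hmB : m ≤ B := min_le_right _ _
      have hclamp : max 0 m = m := max_eq_right hm0
      set t := e / B with ht
      have ht0 : 0 ≤ t := div_nonneg he.1 hB.le
      have ht1 : t ≤ 1 := (div_le_one hB).2 he.2
      have htB : t * B = e := div_mul_cancel₀ e hB.ne'
      set c := (1 - t) * x' + t * B with hc
      have hc0 : 0 ≤ c := add_nonneg (mul_nonneg (by linarith) hx'0) (mul_nonneg ht0 hB.le)
      have hcB : c ≤ B := by nlinarith
      have hcm : c ≤ m := by
        apply le_min
        · nlinarith [mul_nonneg ht0 hx'0]
        · exact hcB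
      have step1 : g e ≤ ffpVb B γ q n c := by
        have := ffpVb_concave B γ q hB hγq hq0 hq1 n x' B (1 - t) t
          ⟨hx'0, hx'B⟩ ⟨hB.le, le_refl B⟩ (by linarith) ht0 (by ring)
        have hge : g e = (1 - t) * ffpVb B γ q n x' + t * ffpVb B γ q n B := by
          rw [hgdef]; field_simp [ht]; rw [← htB]; ring
        rw [hge]; exact this
      have step2 : ffpVb B γ q n c ≤ ffpVb B γ q n m :=
        ffpVb_mono B γ q hB hγq hq0 hq1 n c m hc0 hcm hmB
      have step3 : ffpVb B γ q n m ≤ ffpV B γ q ν n m := ih m ⟨hm0, hmB⟩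
      rw [hclamp]
      exact le_trans step1 (le_trans step2 step3)
    have hVint := ffpV_clamp_integrable B γ q ν hB hγq n x
    have hIle : (∫ e, g e ∂ν) ≤ ∫ e, ffpV B γ q ν n (max 0 (min ((1 - q) * x + e) B)) ∂ν :=
      integral_mono_ae hgint hVint h_ae
    have hIg : (∫ e, g e ∂ν) = (1 - q) * ffpVb B γ q n x' + q * ffpVb B γ q n B := by
      rw [hgdef]
      rw [integral_add (integrable_const _) (hIntId.const_mul _), integral_const,
        integral_const_mul]
      simp only [measure_univ, probReal_univ, ENNReal.toReal_one, smul_eq_mul, one_mul]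
      rw [← hμ, hq]
      field_simp
      ring
    have hn0 : (0:ℝ) ≤ (n:ℝ) := Nat.cast_nonneg n
    have hn1 : (0:ℝ) < (n:ℝ) + 1 := by positivity
    simp only [ffpV, ffpVb]
    apply div_le_div_of_nonneg_right ?_ hn1.le
    have key : q * ffpVb B γ q n B + (1 - q) * ffpVb B γ q n ((1 - q) * x)
        ≤ ∫ e, ffpV B γ q ν n (max 0 (min ((1 - q) * x + e) B)) ∂ν := by
      rw [← hx'def]; linarith [hIle, hIg.le, hIg.symm.le]
    nlinarith [mul_le_mul_of_nonneg_left key hn0]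

lemma integrable_dirac_real (f : ℝ → ℝ) (a : ℝ) : Integrable f (Measure.dirac a) := by
  apply (integrable_const (f a)).congr
  rw [MeasureTheory.ae_dirac_eq]
  exact Filter.eventually_pure.2 rfl

lemma integral_nuhat (q B : ℝ) (hq0 : 0 ≤ q) (hq1 : q ≤ 1) (f : ℝ → ℝ) :
    ∫ e, f e ∂(ENNReal.ofReal q • Measure.dirac B + ENNReal.ofReal (1 - q) • Measure.dirac 0)
      = q * f B + (1 - q) * f 0 := by
  rw [integral_add_measure ((integrable_dirac_real f B).smul_measure ENNReal.ofReal_ne_top)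
      ((integrable_dirac_real f 0).smul_measure ENNReal.ofReal_ne_top),
    integral_smul_measure, integral_smul_measure, integral_dirac, integral_dirac,
    ENNReal.toReal_ofReal hq0, ENNReal.toReal_ofReal (by linarith), smul_eq_mul, smul_eq_mul]

/-- **Bernoulli is the worst-case arrival distribution for the fixed fraction policy.**
Fix `B > 0`, `γ > 0` and a probability measure `ν` supported on `[0, B]` with mean `μ`;
set `q = μ / B`. Let `W n` be the `n`-horizon value function of the fixed fraction policy
under `ν` (satisfying the stated recursion) and let `Wb n` be the corresponding value
function under the Bernoulli measure `ν̂` on `{0, B}` with `ν̂({B}) = q` (which has the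
same mean `μ`). Then `W n x ≥ Wb n x` for all `n ≥ 1` and `x ∈ [0, B]`. -/
theorem stmt_9 (B γ : ℝ) (hB : 0 < B) (hγ : 0 < γ)
    (ν : Measure ℝ) [IsProbabilityMeasure ν]
    (hsupp : ∀ᵐ e ∂ν, e ∈ Set.Icc 0 B)
    (μ q : ℝ) (hμ : μ = ∫ e, e ∂ν) (hq : q = μ / B)
    (νhat : Measure ℝ)
    (hνhat : νhat = ENNReal.ofReal q • Measure.dirac B
      + ENNReal.ofReal (1 - q) • Measure.dirac 0)
    (W Wb : ℕ → ℝ → ℝ)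
    (hW1 : ∀ x ∈ Set.Icc (0:ℝ) B, W 1 x = (1 / 2) * Real.logb 2 (1 + γ * q * x))
    (hWrec : ∀ n : ℕ, 1 ≤ n → ∀ x ∈ Set.Icc (0:ℝ) B,
      ((n : ℝ) + 1) * W (n + 1) x = (1 / 2) * Real.logb 2 (1 + γ * q * x)
        + (n : ℝ) * ∫ e, W n (min ((1 - q) * x + e) B) ∂ν)
    (hWb1 : ∀ x ∈ Set.Icc (0:ℝ) B, Wb 1 x = (1 / 2) * Real.logb 2 (1 + γ * q * x))
    (hWbrec : ∀ n : ℕ, 1 ≤ n → ∀ x ∈ Set.Icc (0:ℝ) B,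
      ((n : ℝ) + 1) * Wb (n + 1) x = (1 / 2) * Real.logb 2 (1 + γ * q * x)
        + (n : ℝ) * ∫ e, Wb n (min ((1 - q) * x + e) B) ∂νhat) :
    ∀ n : ℕ, 1 ≤ n → ∀ x ∈ Set.Icc (0:ℝ) B, Wb n x ≤ W n x := by
  -- basic facts about q
  have hIntId : Integrable (fun e : ℝ => e) ν := by
    refine ⟨measurable_id.aestronglyMeasurable, ?_⟩
    exact HasFiniteIntegral.of_bounded (C := B) (by
      filter_upwards [hsupp] with e he
      rw [Real.norm_eq_abs, abs_le]; exact ⟨by linarith [he.1], he.2⟩)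
  have hμ0 : 0 ≤ μ := by
    rw [hμ]
    apply integral_nonneg_of_ae
    filter_upwards [hsupp] with e he using he.1
  have hμB : μ ≤ B := by
    rw [hμ]
    calc (∫ e : ℝ, e ∂ν) ≤ ∫ _, B ∂ν := by
          apply integral_mono_ae hIntId (integrable_const B)
          filter_upwards [hsupp] with e he using he.2
      _ = B := by simp
  have hq0 : 0 ≤ q := hq ▸ div_nonneg hμ0 hB.le
  have hq1 : q ≤ 1 := hq ▸ (div_le_one hB).2 hμB
  have hγq : 0 ≤ γ * q := mul_nonneg hγ.le hq0
  -- W agrees with the canonical value function ffpV on [0, B]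
  have hWeq : ∀ n : ℕ, 1 ≤ n → ∀ x ∈ Set.Icc (0:ℝ) B, W n x = ffpV B γ q ν n x := by
    intro n hn
    induction n, hn using Nat.le_induction with
    | base =>
      intro x hx
      rw [hW1 x hx]
      show _ = ffpV B γ q ν (0 + 1) x
      simp only [ffpV]
      norm_num
    | succ n hn ih =>
      intro x hx
      have hrec := hWrec n hn x hx
      have hcongr : (∫ e, W n (min ((1 - q) * x + e) B) ∂ν)
          = ∫ e, ffpV B γ q ν n (max 0 (min ((1 - q) * x + e) B)) ∂ν := by
        apply integral_congr_ae
        filter_upwards [hsupp] with e he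
        have hm0 : 0 ≤ min ((1 - q) * x + e) B :=
          le_min (by nlinarith [hx.1, he.1, mul_nonneg (show (0:ℝ) ≤ 1 - q by linarith) hx.1])
            hB.le
        rw [max_eq_right hm0]
        exact ih _ ⟨hm0, min_le_right _ _⟩
      rw [hcongr] at hrec
      have hn1 : ((n:ℝ) + 1) ≠ 0 := by positivity
      apply mul_left_cancel₀ hn1
      rw [hrec]
      simp only [ffpV]
      field_simp
  -- Wb agrees with the canonical Bernoulli value function ffpVb on [0, B]
  have hWbeq : ∀ n : ℕ, 1 ≤ n → ∀ x ∈ Set.Icc (0:ℝ) B, Wb n x = ffpVb B γ q n x := by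
    intro n hn
    induction n, hn using Nat.le_induction with
    | base =>
      intro x hx
      rw [hWb1 x hx]
      show _ = ffpVb B γ q (0 + 1) x
      simp only [ffpVb]
      norm_num
    | succ n hn ih =>
      intro x hx
      have hx'0 : 0 ≤ (1 - q) * x := mul_nonneg (by linarith) hx.1
      have hx'B : (1 - q) * x ≤ B := by nlinarith [hx.2]
      have hrec := hWbrec n hn x hx
      rw [hνhat] at hrec
      rw [integral_nuhat q B hq0 hq1] at hrec
      have e1 : min ((1 - q) * x + B) B = B := min_eq_right (by linarith)
      have e2 : min ((1 - q) * x + 0) B = (1 - q) * x := by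
        rw [add_zero]; exact min_eq_left hx'B
      rw [e1, e2, ih B ⟨hB.le, le_refl B⟩, ih ((1 - q) * x) ⟨hx'0, hx'B⟩] at hrec
      have hn1 : ((n:ℝ) + 1) ≠ 0 := by positivity
      apply mul_left_cancel₀ hn1
      rw [hrec]
      simp only [ffpVb]
      field_simp
  intro n hn x hx
  rw [hWeq n hn x hx, hWbeq n hn x hx]
  exact main_ineq B γ q μ ν hB hγ hq0 hq1 hsupp hμ hq n x hx
end

section
/- Fix B̄ > 0, γ > 0, 0 ≤ q ≤ 1, and define W_n : [0, B̄] → ℝ recursively by W_1(x) = ½·log₂(1 + γ·q·x) and n·W_n(x) = ½·log₂(1 + γ·q·x) + q·(n−1)·W_{n−1}(B̄) + (1−q)·(n−1)·W_{n−1}((1−q)·x). Then for every n ≥ 1, the function W_n is concave and nondecreasing on [0, B̄]. -/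
private lemma concaveOn_congr' {s : Set ℝ} {f g : ℝ → ℝ} (h : ConcaveOn ℝ s f)
    (he : Set.EqOn f g s) : ConcaveOn ℝ s g := by
  refine ⟨h.1, fun x hx y hy a b ha hb hab => ?_⟩
  rw [← he hx, ← he hy, ← he (h.1 hx hy ha hb hab)]
  exact h.2 hx hy ha hb hab

/-- **Concavity and monotonicity of the Bernoulli value functions.** Fix `B > 0`,
`γ > 0`, `0 ≤ q ≤ 1`, and let `W n` satisfy `W 1 x = ½ log₂(1 + γ q x)` and
`(n+1) W (n+1) x = ½ log₂(1 + γ q x) + q n W n B + (1-q) n W n ((1-q) x)` on `[0, B]`.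
Then every `W n`, `n ≥ 1`, is concave and nondecreasing on `[0, B]`. -/
theorem stmt_10 (B γ q : ℝ) (hB : 0 < B) (hγ : 0 < γ) (hq0 : 0 ≤ q) (hq1 : q ≤ 1)
    (W : ℕ → ℝ → ℝ)
    (hW1 : ∀ x ∈ Set.Icc (0:ℝ) B, W 1 x = (1 / 2) * Real.logb 2 (1 + γ * q * x))
    (hWrec : ∀ n : ℕ, 1 ≤ n → ∀ x ∈ Set.Icc (0:ℝ) B,
      ((n : ℝ) + 1) * W (n + 1) x = (1 / 2) * Real.logb 2 (1 + γ * q * x)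
        + q * (n : ℝ) * W n B + (1 - q) * (n : ℝ) * W n ((1 - q) * x)) :
    ∀ n : ℕ, 1 ≤ n →
      ConcaveOn ℝ (Set.Icc 0 B) (W n) ∧ MonotoneOn (W n) (Set.Icc 0 B) := by
  have hlog2 : (0:ℝ) < Real.log 2 := Real.log_pos one_lt_two
  have hc0 : 0 ≤ γ * q := by positivity
  set L : ℝ → ℝ := fun x => (1/2) * Real.logb 2 (1 + γ * q * x) with hL
  -- concavity of L
  have hlogc : ConcaveOn ℝ (Set.Icc (0:ℝ) B) (fun x => Real.log (1 + γ * q * x)) := by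
    refine ⟨convex_Icc _ _, ?_⟩
    intro x hx y hy a b ha hb hab
    have hx' : (0:ℝ) < 1 + γ * q * x := by nlinarith [hx.1]
    have hy' : (0:ℝ) < 1 + γ * q * y := by nlinarith [hy.1]
    have key := strictConcaveOn_log_Ioi.concaveOn.2 (Set.mem_Ioi.mpr hx')
      (Set.mem_Ioi.mpr hy') ha hb hab
    simp only [smul_eq_mul] at key ⊢
    have e : 1 + γ * q * (a*x + b*y) = a*(1 + γ*q*x) + b*(1 + γ*q*y) := by
      have hb' : b = 1 - a := by linarith
      rw [hb']; ring
    rw [e]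
    exact key
  have hLc : ConcaveOn ℝ (Set.Icc (0:ℝ) B) L := by
    have he : L = fun x => ((1/2)/Real.log 2) • Real.log (1 + γ * q * x) := by
      funext x; simp [hL, Real.logb, smul_eq_mul]; ring
    rw [he]
    exact hlogc.smul (by positivity)
  have hLm : MonotoneOn L (Set.Icc (0:ℝ) B) := by
    intro x hx y hy hxy
    have hx' : (0:ℝ) < 1 + γ * q * x := by nlinarith [hx.1]
    have h1 : Real.log (1 + γ*q*x) ≤ Real.log (1 + γ*q*y) :=
      Real.log_le_log hx' (by nlinarith)
    simp only [hL, Real.logb]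
    gcongr
  have hmem : ∀ x ∈ Set.Icc (0:ℝ) B, (1-q)*x ∈ Set.Icc (0:ℝ) B := by
    intro x hx
    exact ⟨by nlinarith [hx.1], by nlinarith [hx.1, hx.2]⟩
  intro n hn
  induction n, hn using Nat.le_induction with
  | base =>
    constructor
    · exact concaveOn_congr' hLc (fun x hx => (hW1 x hx).symm)
    · intro x hx y hy hxy
      rw [hW1 x hx, hW1 y hy]
      exact hLm hx hy hxy
  | succ n hn ih =>
    obtain ⟨Cn, Mn⟩ := ih
    -- composition with x ↦ (1-q)x
    have hgC : ConcaveOn ℝ (Set.Icc (0:ℝ) B) (fun x => W n ((1-q)*x)) := by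
      refine ⟨convex_Icc _ _, ?_⟩
      intro x hx y hy a b ha hb hab
      have key := Cn.2 (hmem x hx) (hmem y hy) ha hb hab
      simp only [smul_eq_mul] at key ⊢
      have e : (1-q)*(a*x + b*y) = a*((1-q)*x) + b*((1-q)*y) := by ring
      rw [e]
      exact key
    have hgM : MonotoneOn (fun x => W n ((1-q)*x)) (Set.Icc (0:ℝ) B) := by
      intro x hx y hy hxy
      exact Mn (hmem x hx) (hmem y hy) (by nlinarith)
    have hnn : (0:ℝ) ≤ (1-q)*(n:ℝ) := mul_nonneg (by linarith) (Nat.cast_nonneg n)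
    set f : ℝ → ℝ := fun x =>
      (((n:ℝ)+1))⁻¹ * (L x + q * (n:ℝ) * W n B + (1-q) * (n:ℝ) * W n ((1-q)*x)) with hf
    have hn1 : (0:ℝ) < (n:ℝ) + 1 := by positivity
    have heq : Set.EqOn f (W (n+1)) (Set.Icc (0:ℝ) B) := by
      intro x hx
      have := hWrec n hn x hx
      simp only [hf, hL]
      rw [inv_mul_eq_iff_eq_mul₀ hn1.ne']
      linarith [this]
    have hfc : ConcaveOn ℝ (Set.Icc (0:ℝ) B) f := by
      have h1 : ConcaveOn ℝ (Set.Icc (0:ℝ) B)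
          (fun x => L x + q * (n:ℝ) * W n B + (1-q) * (n:ℝ) * W n ((1-q)*x)) := by
        refine ConcaveOn.add (ConcaveOn.add hLc (concaveOn_const _ (convex_Icc _ _))) ?_
        have := hgC.smul (c := (1-q) * (n:ℝ)) hnn
        exact this
      have := h1.smul (c := (((n:ℝ)+1))⁻¹) (by positivity)
      exact this
    constructor
    · exact concaveOn_congr' hfc heq
    · intro x hx y hy hxy
      rw [← heq hx, ← heq hy]
      have h1 := hLm hx hy hxy
      have h2 := hgM hx hy hxy
      simp only [hf]
      have h3 : 0 ≤ ((n:ℝ)+1)⁻¹ := by positivity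
      nlinarith [mul_le_mul_of_nonneg_left h2 hnn]
end

section
/- Let (E_t)_{t≥1} be i.i.d. nonnegative random variables, B̄ > 0, γ > 0, μ = E[min{E_1, B̄}] > 0, and q = μ/B̄. Define the battery process b_1 = B̄, b_{t+1} = min{(1−q)·b_t + min{E_{t+1}, B̄}, B̄}, and the fixed fraction policy g_t = q·b_t. Then liminf_{n→∞} (1/n)∑_{t=1}^n E[½·log₂(1 + γ·g_t)] ≥ ½·log₂(1 + γ·μ) − 1/(2·ln 2). -/
open MeasureTheory ProbabilityTheory Filter Finset

/-- Simulator for the battery recursion as a measurable function of the arrival path. -/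
noncomputable def ffpSim (B q : ℝ) : ℕ → (ℕ → ℝ) → ℝ
  | 0, _ => B
  | 1, _ => B
  | (t+2), e => min ((1 - q) * ffpSim B q (t+1) e + min (e (t+2)) B) B

lemma ffpSim_measurable (B q : ℝ) (t : ℕ) : Measurable (ffpSim B q t) := by
  induction t with
  | zero => exact measurable_const
  | succ n ih =>
    rcases n with _ | m
    · exact measurable_const
    · exact ((ih.const_mul _).add ((measurable_pi_apply _).min measurable_const)).min
        measurable_const

lemma ffpSim_congr (B q : ℝ) : ∀ (t : ℕ) (e e' : ℕ → ℝ),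
    (∀ i, i ≤ t → e i = e' i) → ffpSim B q t e = ffpSim B q t e' := by
  intro t
  induction t with
  | zero => intro e e' h; rfl
  | succ n ih =>
    rcases n with _ | m
    · intro e e' h; rfl
    · intro e e' h
      show min ((1 - q) * ffpSim B q (m+1) e + min (e (m+2)) B) B
        = min ((1 - q) * ffpSim B q (m+1) e' + min (e' (m+2)) B) B
      rw [ih e e' (fun i hi => h i (Nat.le_succ_of_le hi)), h (m+2) le_rfl]

lemma ffp_log_min_one {z : ℝ} (hz : 0 < z) : Real.log (min z 1) = min (Real.log z) 0 := by
  rcases le_total z 1 with h | h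
  · rw [min_eq_left h, min_eq_left (Real.log_nonpos hz.le h)]
  · rw [min_eq_right h, min_eq_right (Real.log_nonneg h), Real.log_one]

lemma ffp_chord {c u : ℝ} (hc0 : 0 < c) (hc1 : c ≤ 1) (hu0 : 0 ≤ u) (hu1 : u ≤ 1) :
    (1 - u) * Real.log c ≤ min (Real.log (c + u)) 0 := by
  have hconc := (strictConcaveOn_log_Ioi.concaveOn).2 (Set.mem_Ioi.mpr hc0)
    (Set.mem_Ioi.mpr (by linarith : (0:ℝ) < c + 1)) (by linarith : (0:ℝ) ≤ 1 - u) hu0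
    (by ring)
  simp only [smul_eq_mul] at hconc
  have hc1' : (1 - u) * c + u * (c + 1) = c + u := by ring
  rw [hc1'] at hconc
  refine le_min ?_ (mul_nonpos_of_nonneg_of_nonpos (by linarith) (Real.log_nonpos hc0.le hc1))
  have hlog1 : 0 ≤ Real.log (c + 1) := Real.log_nonneg (by linarith)
  nlinarith

lemma ffp_slog {s : ℝ} (hs : 0 < s) : s - 1 ≤ s * Real.log s := by
  have h := Real.log_le_sub_one_of_pos (show (0:ℝ) < s⁻¹ by positivity)
  rw [Real.log_inv] at h
  have h2 := mul_le_mul_of_nonneg_left h hs.le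
  have hne : s ≠ 0 := hs.ne'
  rw [mul_sub, mul_inv_cancel₀ hne] at h2
  nlinarith

set_option maxHeartbeats 1000000 in
/-- **Additive near-optimality of the Fixed Fraction Policy.** For i.i.d. nonnegative
arrivals `E`, battery capacity `B > 0`, SNR `γ > 0`, `μ = 𝔼[min (E 1) B] > 0`,
`q = μ / B`, battery `b 1 = B`, `b (t+1) = min ((1-q) b t + min (E (t+1)) B) B`, and
the Fixed Fraction Policy `g t = q * b t`, the long-term average throughput satisfies
`liminf_n (1/n) ∑_{t=1}^n 𝔼[½ log₂(1 + γ g t)] ≥ ½ log₂(1 + γ μ) - 1/(2 ln 2)`. -/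
theorem stmt_11 {Ω : Type*} [MeasurableSpace Ω] (P : Measure Ω) [IsProbabilityMeasure P]
    (B γ : ℝ) (hB : 0 < B) (hγ : 0 < γ)
    (E : ℕ → Ω → ℝ) (hEmeas : ∀ t, Measurable (E t))
    (hEnn : ∀ t ω, 0 ≤ E t ω)
    (hindep : iIndepFun E P)
    (hident : ∀ t, IdentDistrib (E t) (E 1) P P)
    (μ q : ℝ) (hμ : μ = ∫ ω, min (E 1 ω) B ∂P) (hμpos : 0 < μ) (hq : q = μ / B)
    (b g : ℕ → Ω → ℝ)
    (hb1 : ∀ ω, b 1 ω = B)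
    (hbrec : ∀ t, 1 ≤ t → ∀ ω,
      b (t + 1) ω = min ((1 - q) * b t ω + min (E (t + 1) ω) B) B)
    (hg : ∀ t, 1 ≤ t → ∀ ω, g t ω = q * b t ω) :
    (1 / 2) * Real.logb 2 (1 + γ * μ) - 1 / (2 * Real.log 2)
      ≤ liminf (fun n : ℕ => (1 / (n : ℝ)) * ∑ t ∈ Finset.Icc 1 n,
          ∫ ω, (1 / 2) * Real.logb 2 (1 + γ * g t ω) ∂P) atTop := by
  classical
  have hlog2 : 0 < Real.log 2 := Real.log_pos one_lt_two
  have hBne : B ≠ 0 := hB.ne'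
  have hint_bdd : ∀ (f : Ω → ℝ) (Cf : ℝ), Measurable f → (∀ ω, |f ω| ≤ Cf) →
      Integrable f P := by
    intro f Cf hf h
    exact (integrable_const Cf).mono' hf.aestronglyMeasurable
      (Filter.Eventually.of_forall (fun ω => by simpa [Real.norm_eq_abs] using h ω))
  have hmmeas : ∀ s : ℕ, Measurable (fun ω => min (E s ω) B) :=
    fun s => (hEmeas s).min measurable_const
  have hmnn : ∀ (s : ℕ) ω, 0 ≤ min (E s ω) B := fun s ω => le_min (hEnn s ω) hB.le
  have hmleB : ∀ (s : ℕ) ω, min (E s ω) B ≤ B := fun s ω => min_le_right _ _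
  have hmint : ∀ s : ℕ, Integrable (fun ω => min (E s ω) B) P := fun s =>
    hint_bdd _ B (hmmeas s) (fun ω => abs_le.2 ⟨by linarith [hmnn s ω], hmleB s ω⟩)
  have hμs : ∀ s : ℕ, ∫ ω, min (E s ω) B ∂P = μ := by
    intro s; rw [hμ]
    exact ((hident s).comp (measurable_id.min measurable_const)).integral_eq
  have hμleB : μ ≤ B := by
    rw [hμ]
    calc ∫ ω, min (E 1 ω) B ∂P ≤ ∫ _, B ∂P :=
          integral_mono (hmint 1) (integrable_const B) (hmleB 1)
      _ = B := by simp
  have hq0 : 0 < q := by rw [hq]; positivity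
  have hqle1 : q ≤ 1 := by rw [hq]; exact div_le_one_of_le₀ hμleB hB.le
  -- per-step bounds on the expected throughput
  have key : ∀ t, 1 ≤ t →
      ((1/2) * Real.logb 2 (1 + γ*μ) - 1/(2*Real.log 2)
        ≤ ∫ ω, (1/2) * Real.logb 2 (1 + γ * g t ω) ∂P)
      ∧ (∫ ω, (1/2) * Real.logb 2 (1 + γ * g t ω) ∂P ≤ (1/2) * Real.logb 2 (1 + γ*μ)) := by
    rcases eq_or_lt_of_le hμleB with hqB | hlt
    · -- degenerate case μ = B, i.e. q = 1 : battery is a.s. full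
      have hq1 : q = 1 := by rw [hq, hqB, div_self hBne]
      have hae : ∀ s : ℕ, ∀ᵐ ω ∂P, min (E s ω) B = B := by
        intro s
        have h0 : ∫ ω, (B - min (E s ω) B) ∂P = 0 := by
          rw [integral_sub (integrable_const B) (hmint s), hμs s]
          simp [hqB]
        have h1 := (integral_eq_zero_iff_of_nonneg
          (fun ω => sub_nonneg.2 (hmleB s ω)) ((integrable_const B).sub (hmint s))).mp h0
        filter_upwards [h1] with ω hω
        have hω' : B - min (E s ω) B = 0 := hω
        linarith
      have hbae : ∀ t, 1 ≤ t → ∀ᵐ ω ∂P, b t ω = B := by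
        intro t ht
        induction t, ht using Nat.le_induction with
        | base => exact Filter.Eventually.of_forall hb1
        | succ t ht ih =>
          filter_upwards [ih, hae (t+1)] with ω h1 h2
          rw [hbrec t ht ω, h1, h2, hq1]
          norm_num
      intro t ht
      have hIc : ∫ ω, (1/2) * Real.logb 2 (1 + γ * g t ω) ∂P
          = (1/2) * Real.logb 2 (1 + γ*μ) := by
        have hcongr : (fun ω => (1/2) * Real.logb 2 (1 + γ * g t ω))
            =ᵐ[P] (fun _ => (1/2) * Real.logb 2 (1 + γ*μ)) := by
          filter_upwards [hbae t ht] with ω hω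
          rw [hg t ht ω, hω, hq1, one_mul, hqB]
        rw [integral_congr_ae hcongr, integral_const]
        simp
      rw [hIc]
      have hpos : (0:ℝ) < 1/(2*Real.log 2) := by positivity
      exact ⟨by linarith, le_rfl⟩
    · -- main case μ < B, i.e. q < 1
      have hq1 : q < 1 := by rw [hq]; exact (div_lt_one hB).2 hlt
      have h1q : 0 < 1 - q := by linarith
      have h1qne : (1:ℝ) - q ≠ 0 := h1q.ne'
      have hbmeas : ∀ t, 1 ≤ t → Measurable (b t) := by
        intro t ht
        induction t, ht using Nat.le_induction with
        | base =>
          have : b 1 = fun _ => B := funext hb1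
          rw [this]; exact measurable_const
        | succ t ht ih =>
          have : b (t+1) = fun ω => min ((1-q) * b t ω + min (E (t+1) ω) B) B :=
            funext (hbrec t ht)
          rw [this]
          exact ((ih.const_mul _).add ((hEmeas _).min measurable_const)).min measurable_const
      have hbbd : ∀ t, 1 ≤ t → ∀ ω, (1-q)^(t-1) * B ≤ b t ω ∧ b t ω ≤ B := by
        intro t ht
        induction t, ht using Nat.le_induction with
        | base => intro ω; rw [hb1]; simp
        | succ t ht ih =>
          intro ω
          obtain ⟨h1, h2⟩ := ih ω
          obtain ⟨s, rfl⟩ : ∃ s, t = s + 1 := ⟨t-1, (Nat.succ_pred_eq_of_pos ht).symm⟩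
          rw [hbrec (s+1) ht ω]
          have hpow : (0:ℝ) ≤ (1-q)^s := pow_nonneg h1q.le s
          have hpow1 : (1-q)^(s+1) ≤ 1 := pow_le_one₀ h1q.le (by linarith)
          simp only [Nat.add_sub_cancel] at h1 ⊢
          constructor
          · refine le_min ?_ (by nlinarith)
            have hm := hmnn (s+2) ω
            have := mul_le_mul_of_nonneg_left h1 h1q.le
            calc (1-q)^(s+1) * B = (1-q) * ((1-q)^s * B) := by ring
              _ ≤ (1-q) * b (s+1) ω := this
              _ ≤ (1-q) * b (s+1) ω + min (E (s+2) ω) B := by linarith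
          · exact min_le_right _ _
      have hbpos : ∀ t, 1 ≤ t → ∀ ω, 0 < b t ω := fun t ht ω =>
        lt_of_lt_of_le (by positivity) (hbbd t ht ω).1
      have hlogbd : ∀ t, 1 ≤ t → ∀ ω,
          |Real.log (b t ω / B)| ≤ (t:ℝ) * |Real.log (1-q)| := by
        intro t ht ω
        have hx0 : 0 < b t ω / B := div_pos (hbpos t ht ω) hB
        have hx1 : b t ω / B ≤ 1 := (div_le_one hB).2 (hbbd t ht ω).2
        have hup : Real.log (b t ω / B) ≤ 0 := Real.log_nonpos hx0.le hx1
        have hlow : (t:ℝ) * Real.log (1-q) ≤ Real.log (b t ω / B) := by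
          have hp : (1-q)^t ≤ (1-q)^(t-1) := by
            obtain ⟨s, rfl⟩ : ∃ s, t = s + 1 := ⟨t-1, (Nat.succ_pred_eq_of_pos ht).symm⟩
            simp only [Nat.add_sub_cancel, pow_succ]
            nlinarith [pow_nonneg h1q.le s]
          have h2 : (1-q)^t ≤ b t ω / B := by
            rw [le_div_iff₀ hB]
            calc (1-q)^t * B ≤ (1-q)^(t-1) * B := by nlinarith
              _ ≤ b t ω := (hbbd t ht ω).1
          calc (t:ℝ) * Real.log (1-q) = Real.log ((1-q)^t) := (Real.log_pow (1-q) t).symm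
            _ ≤ Real.log (b t ω / B) := Real.log_le_log (by positivity) h2
        have habs : |Real.log (1-q)| = -Real.log (1-q) :=
          abs_of_nonpos (Real.log_nonpos h1q.le (by linarith))
        rw [abs_of_nonpos hup, habs]
        linarith
      have hlogint : ∀ t, 1 ≤ t → Integrable (fun ω => Real.log (b t ω / B)) P :=
        fun t ht => hint_bdd _ _ ((hbmeas t ht).div_const B).log (hlogbd t ht)
      -- representation of b via the simulator, for independence
      have hbSim : ∀ t, 1 ≤ t → ∀ ω, b t ω = ffpSim B q t (fun i => E i ω) := by
        intro t ht
        induction t, ht using Nat.le_induction with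
        | base => intro ω; rw [hb1]; rfl
        | succ t ht ih =>
          intro ω
          obtain ⟨s, rfl⟩ : ∃ s, t = s + 1 := ⟨t-1, (Nat.succ_pred_eq_of_pos ht).symm⟩
          rw [hbrec (s+1) ht ω, ih ω]
          rfl
      have hindepmul : ∀ t, 1 ≤ t →
          IndepFun (fun ω => 1 - min (E (t+1) ω) B / B)
            (fun ω => Real.log (1-q) + Real.log (b t ω / B)) P := by
        intro t ht
        have hdisj : Disjoint (Finset.range (t+1)) ({t+1} : Finset ℕ) := by simp
        have hbase := hindep.indepFun_finset (Finset.range (t+1)) {t+1} hdisj hEmeas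
        set φ : ((Finset.range (t+1) : Finset ℕ) → ℝ) → ℝ := fun v =>
          Real.log (1-q) + Real.log (ffpSim B q t (fun i =>
            if h : i ∈ Finset.range (t+1) then v ⟨i, h⟩ else 0) / B) with hφ
        set ψ : (({t+1} : Finset ℕ) → ℝ) → ℝ := fun v =>
          1 - min (v ⟨t+1, Finset.mem_singleton_self _⟩) B / B with hψ
        have hφm : Measurable φ := by
          apply measurable_const.add
          apply Measurable.log
          apply Measurable.div_const
          apply (ffpSim_measurable B q t).comp
          apply measurable_pi_lambda
          intro i
          by_cases h : i ∈ Finset.range (t+1)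
          · simp only [dif_pos h]; exact measurable_pi_apply _
          · simp only [dif_neg h]; exact measurable_const
        have hψm : Measurable ψ := by
          apply measurable_const.sub
          exact ((measurable_pi_apply (X := fun _ => ℝ)
            (⟨t+1, Finset.mem_singleton_self _⟩ : (({t+1}) : Finset ℕ))).min
            measurable_const).div_const B
        have heq2 : (fun ω => Real.log (1-q) + Real.log (b t ω / B))
            = φ ∘ (fun a (i : (Finset.range (t+1) : Finset ℕ)) => E i a) := by
          funext ω
          simp only [Function.comp_apply, hφ]
          have hsim : ffpSim B q t (fun i =>
              if h : i ∈ Finset.range (t+1) then E i ω else 0) = b t ω := by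
            rw [hbSim t ht ω]
            exact ffpSim_congr B q t _ _
              (fun i hi => dif_pos (Finset.mem_range.mpr (Nat.lt_succ_of_le hi)))
          rw [hsim]
        have heq1 : (fun ω => 1 - min (E (t+1) ω) B / B)
            = ψ ∘ (fun a (i : (({t+1}) : Finset ℕ)) => E i a) := rfl
        rw [heq1, heq2]
        exact (hbase.comp hφm hψm).symm
      -- the key induction : E[log (b t / B)] ≥ -1
      have hY : ∀ t, 1 ≤ t → -1 ≤ ∫ ω, Real.log (b t ω / B) ∂P := by
        intro t ht
        induction t, ht using Nat.le_induction with
        | base =>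
          have hz : (fun ω => Real.log (b 1 ω / B)) = fun _ => (0:ℝ) := by
            funext ω; rw [hb1, div_self hBne, Real.log_one]
          rw [hz]; simp
        | succ t ht ih =>
          have hpt : ∀ ω, (1 - min (E (t+1) ω) B / B) *
              (Real.log (1-q) + Real.log (b t ω / B)) ≤ Real.log (b (t+1) ω / B) := by
            intro ω
            have hx0 : 0 < b t ω / B := div_pos (hbpos t ht ω) hB
            have hx1 : b t ω / B ≤ 1 := (div_le_one hB).2 (hbbd t ht ω).2
            have hu0 : 0 ≤ min (E (t+1) ω) B / B := div_nonneg (hmnn _ ω) hB.le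
            have hu1 : min (E (t+1) ω) B / B ≤ 1 := (div_le_one hB).2 (hmleB _ ω)
            have hc0 : 0 < (1-q) * (b t ω / B) := mul_pos h1q hx0
            have hc1 : (1-q) * (b t ω / B) ≤ 1 := by nlinarith
            have hrw : b (t+1) ω / B
                = min ((1-q) * (b t ω / B) + min (E (t+1) ω) B / B) 1 := by
              have hsum : (1-q) * (b t ω / B) + min (E (t+1) ω) B / B
                  = ((1-q) * b t ω + min (E (t+1) ω) B) / B := by ring
              rw [hbrec t ht ω, hsum]
              rcases le_total ((1-q) * b t ω + min (E (t+1) ω) B) B with h | h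
              · rw [min_eq_left h, min_eq_left ((div_le_one hB).2 h)]
              · rw [min_eq_right h, min_eq_right ((one_le_div hB).2 h), div_self hBne]
            calc (1 - min (E (t+1) ω) B / B) * (Real.log (1-q) + Real.log (b t ω / B))
                = (1 - min (E (t+1) ω) B / B) * Real.log ((1-q) * (b t ω / B)) := by
                  rw [Real.log_mul h1qne hx0.ne']
              _ ≤ min (Real.log ((1-q) * (b t ω / B) + min (E (t+1) ω) B / B)) 0 :=
                  ffp_chord hc0 hc1 hu0 hu1
              _ = Real.log (min ((1-q) * (b t ω / B) + min (E (t+1) ω) B / B) 1) :=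
                  (ffp_log_min_one (by positivity)).symm
              _ = Real.log (b (t+1) ω / B) := by rw [hrw]
          -- integrability of the three functions involved
          have hXm : Measurable (fun ω => 1 - min (E (t+1) ω) B / B) :=
            measurable_const.sub ((hmmeas (t+1)).div_const B)
          have hYm : Measurable (fun ω => Real.log (1-q) + Real.log (b t ω / B)) :=
            measurable_const.add ((hbmeas t ht).div_const B).log
          have hXbd : ∀ ω, |1 - min (E (t+1) ω) B / B| ≤ 1 := by
            intro ω
            have hu0 : 0 ≤ min (E (t+1) ω) B / B := div_nonneg (hmnn _ ω) hB.le
            have hu1 : min (E (t+1) ω) B / B ≤ 1 := (div_le_one hB).2 (hmleB _ ω)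
            rw [abs_le]; constructor <;> linarith
          have hYbd : ∀ ω, |Real.log (1-q) + Real.log (b t ω / B)|
              ≤ |Real.log (1-q)| + (t:ℝ) * |Real.log (1-q)| := fun ω =>
            (abs_add_le _ _).trans (by linarith [hlogbd t ht ω])
          have hXint : Integrable (fun ω => 1 - min (E (t+1) ω) B / B) P :=
            hint_bdd _ 1 hXm hXbd
          have hYint : Integrable (fun ω => Real.log (1-q) + Real.log (b t ω / B)) P :=
            hint_bdd _ _ hYm hYbd
          have hprodint : Integrable (fun ω => (1 - min (E (t+1) ω) B / B) *
              (Real.log (1-q) + Real.log (b t ω / B))) P := by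
            refine hint_bdd _ (1 * (|Real.log (1-q)| + (t:ℝ) * |Real.log (1-q)|))
              (hXm.mul hYm) (fun ω => ?_)
            rw [abs_mul]
            exact mul_le_mul (hXbd ω) (hYbd ω) (abs_nonneg _) zero_le_one
          have hmono := integral_mono hprodint (hlogint (t+1) (by linarith)) hpt
          have hmul : ∫ ω, (1 - min (E (t+1) ω) B / B) *
              (Real.log (1-q) + Real.log (b t ω / B)) ∂P
              = (1-q) * (Real.log (1-q) + ∫ ω, Real.log (b t ω / B) ∂P) := by
            have h := (hindepmul t ht).integral_mul_eq_mul_integral hXint.aestronglyMeasurable hYint.aestronglyMeasurable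
            have hLHS : (fun ω => (1 - min (E (t+1) ω) B / B) *
                (Real.log (1-q) + Real.log (b t ω / B)))
                = (fun ω => 1 - min (E (t+1) ω) B / B) *
                  (fun ω => Real.log (1-q) + Real.log (b t ω / B)) := rfl
            rw [hLHS, h]
            have hintu : ∫ ω, (1 - min (E (t+1) ω) B / B) ∂P = 1 - q := by
              rw [integral_sub (integrable_const 1) ((hmint (t+1)).div_const B),
                integral_div, hμs (t+1), hq]
              simp
            have hinty : ∫ ω, (Real.log (1-q) + Real.log (b t ω / B)) ∂P
                = Real.log (1-q) + ∫ ω, Real.log (b t ω / B) ∂P := by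
              rw [integral_add (integrable_const _) (hlogint t ht)]
              simp
            rw [hintu, hinty]
          rw [hmul] at hmono
          have hslog := ffp_slog h1q
          nlinarith [mul_le_mul_of_nonneg_left ih h1q.le]
      -- conclusion of the main case
      intro t ht
      have hxpt : ∀ ω, g t ω = μ * (b t ω / B) := fun ω => by
        rw [hg t ht ω, hq]; field_simp
      have hx0 : ∀ ω, 0 < b t ω / B := fun ω => div_pos (hbpos t ht ω) hB
      have hx1 : ∀ ω, b t ω / B ≤ 1 := fun ω => (div_le_one hB).2 (hbbd t ht ω).2
      have hpt2 : ∀ ω, (1/2) * Real.logb 2 (1 + γ*μ)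
            + (1/(2*Real.log 2)) * Real.log (b t ω / B)
          ≤ (1/2) * Real.logb 2 (1 + γ * g t ω) := by
        intro ω
        have hkey : Real.log (1 + γ*μ) + Real.log (b t ω / B)
            ≤ Real.log (1 + γ * g t ω) := by
          have hμγ : (0:ℝ) < 1 + γ*μ := by nlinarith [mul_pos hγ hμpos]
          rw [hxpt ω, ← Real.log_mul hμγ.ne' (hx0 ω).ne']
          apply Real.log_le_log (mul_pos hμγ (hx0 ω))
          nlinarith [hx1 ω, hx0 ω, mul_pos hγ hμpos]
        have h1 : (1/2) * Real.logb 2 (1 + γ*μ) + (1/(2*Real.log 2)) * Real.log (b t ω / B)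
            = (Real.log (1 + γ*μ) + Real.log (b t ω / B)) / (2 * Real.log 2) := by
          simp only [Real.logb]
          field_simp
        have h2 : (1/2) * Real.logb 2 (1 + γ * g t ω)
            = Real.log (1 + γ * g t ω) / (2 * Real.log 2) := by
          simp only [Real.logb]
          field_simp
        rw [h1, h2]
        exact (div_le_div_iff_of_pos_right (mul_pos two_pos hlog2)).2 hkey
      have hpt3 : ∀ ω, (1/2) * Real.logb 2 (1 + γ * g t ω)
          ≤ (1/2) * Real.logb 2 (1 + γ*μ) := by
        intro ω
        have hgle : 1 + γ * g t ω ≤ 1 + γ*μ := by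
          rw [hxpt ω]
          nlinarith [mul_le_mul_of_nonneg_left (hx1 ω) (mul_pos hγ hμpos).le]
        have hgpos : 0 < 1 + γ * g t ω := by
          rw [hxpt ω]; nlinarith [mul_pos (mul_pos hγ hμpos) (hx0 ω)]
        have := Real.logb_le_logb_of_le one_lt_two hgpos hgle
        linarith
      have hgeq : (fun ω => (1/2) * Real.logb 2 (1 + γ * g t ω))
          = fun ω => (1/2) * (Real.log (1 + γ * (μ * (b t ω / B))) / Real.log 2) := by
        funext ω; rw [hxpt ω]; rfl
      have hgmeas : Measurable (fun ω => (1/2) * Real.logb 2 (1 + γ * g t ω)) := by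
        rw [hgeq]
        exact (((((((hbmeas t ht).div_const B).const_mul μ).const_mul
          γ).const_add 1).log).div_const _).const_mul _
      have hgbd : ∀ ω, |(1/2) * Real.logb 2 (1 + γ * g t ω)|
          ≤ (1/2) * Real.logb 2 (1 + γ*μ) := by
        intro ω
        have hg1 : 1 ≤ 1 + γ * g t ω := by
          rw [hxpt ω]; nlinarith [mul_pos (mul_pos hγ hμpos) (hx0 ω)]
        have h0 : 0 ≤ (1/2) * Real.logb 2 (1 + γ * g t ω) := by
          have := Real.logb_nonneg one_lt_two hg1
          positivity
        rw [abs_of_nonneg h0]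
        exact hpt3 ω
      have hgint : Integrable (fun ω => (1/2) * Real.logb 2 (1 + γ * g t ω)) P :=
        hint_bdd _ _ hgmeas hgbd
      constructor
      · have hrhsint : Integrable (fun ω => (1/2) * Real.logb 2 (1 + γ*μ)
            + (1/(2*Real.log 2)) * Real.log (b t ω / B)) P :=
          (integrable_const _).add ((hlogint t ht).const_mul _)
        have hmono := integral_mono hrhsint hgint hpt2
        rw [integral_add (integrable_const _) ((hlogint t ht).const_mul _),
          integral_const, integral_const_mul] at hmono
        simp only [measure_univ, ENNReal.toReal_one, smul_eq_mul, one_mul, probReal_univ] at hmono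
        have hYt := hY t ht
        have hpos : (0:ℝ) < 1/(2*Real.log 2) := by positivity
        nlinarith
      · have hmono := integral_mono hgint (integrable_const _) hpt3
        simpa using hmono
  -- from the per-step bounds to the liminf
  refine le_liminf_of_le ?_ ?_
  · refine isCoboundedUnder_ge_of_eventually_le (x := (1/2) * Real.logb 2 (1 + γ*μ)) atTop ?_
    filter_upwards [eventually_ge_atTop 1] with n hn
    have hn0 : (0:ℝ) < (n:ℝ) := by exact_mod_cast hn
    have hsum : ∑ t ∈ Finset.Icc 1 n, ∫ ω, (1/2) * Real.logb 2 (1 + γ * g t ω) ∂P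
        ≤ ∑ _t ∈ Finset.Icc 1 n, (1/2) * Real.logb 2 (1 + γ*μ) :=
      Finset.sum_le_sum fun t htm => (key t (Finset.mem_Icc.mp htm).1).2
    rw [Finset.sum_const, Nat.card_Icc, Nat.add_sub_cancel, nsmul_eq_mul] at hsum
    calc (1 / (n:ℝ)) * ∑ t ∈ Finset.Icc 1 n, ∫ ω, (1/2) * Real.logb 2 (1 + γ * g t ω) ∂P
        ≤ (1 / (n:ℝ)) * ((n:ℝ) * ((1/2) * Real.logb 2 (1 + γ*μ))) :=
          mul_le_mul_of_nonneg_left hsum (by positivity)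
      _ = (1/2) * Real.logb 2 (1 + γ*μ) := by field_simp
  · filter_upwards [eventually_ge_atTop 1] with n hn
    have hn0 : (0:ℝ) < (n:ℝ) := by exact_mod_cast hn
    have hsum : ∑ _t ∈ Finset.Icc 1 n, ((1/2) * Real.logb 2 (1 + γ*μ) - 1/(2*Real.log 2))
        ≤ ∑ t ∈ Finset.Icc 1 n, ∫ ω, (1/2) * Real.logb 2 (1 + γ * g t ω) ∂P :=
      Finset.sum_le_sum fun t htm => (key t (Finset.mem_Icc.mp htm).1).1
    rw [Finset.sum_const, Nat.card_Icc, Nat.add_sub_cancel, nsmul_eq_mul] at hsum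
    calc (1/2) * Real.logb 2 (1 + γ*μ) - 1/(2*Real.log 2)
        = (1 / (n:ℝ)) * ((n:ℝ) * ((1/2) * Real.logb 2 (1 + γ*μ) - 1/(2*Real.log 2))) := by
          field_simp
      _ ≤ (1 / (n:ℝ)) * ∑ t ∈ Finset.Icc 1 n, ∫ ω, (1/2) * Real.logb 2 (1 + γ * g t ω) ∂P :=
          mul_le_mul_of_nonneg_left hsum (by positivity)
end

section
/- Let (E_t)_{t≥1} be i.i.d. nonnegative random variables, B̄ > 0, γ > 0, μ = E[min{E_1, B̄}] > 0, and q = μ/B̄. Define the battery process b_1 = B̄, b_{t+1} = min{(1−q)·b_t + min{E_{t+1}, B̄}, B̄}, and the fixed fraction policy g_t = q·b_t. Then liminf_{n→∞} (1/n)∑_{t=1}^n E[½·log₂(1 + γ·g_t)] ≥ (1/2)·½·log₂(1 + γ·μ). -/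
open MeasureTheory ProbabilityTheory Filter Finset

lemma aux_log_concave {x lam : ℝ} (hx : 0 ≤ x) (h0 : 0 ≤ lam) (h1 : lam ≤ 1) :
    lam * Real.log (1 + x) ≤ Real.log (1 + lam * x) := by
  have h := (strictConcaveOn_log_Ioi.concaveOn).2 (Set.mem_Ioi.2 one_pos)
    (Set.mem_Ioi.2 (by linarith : (0:ℝ) < 1 + x))
    (by linarith : (0:ℝ) ≤ 1 - lam) h0 (by ring)
  have e1 : (1 - lam) • (1:ℝ) + lam • (1 + x) = 1 + lam * x := by
    simp only [smul_eq_mul]; ring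
  rw [e1] at h
  simpa [Real.log_one] using h

lemma aux_logb_concave {x lam : ℝ} (hx : 0 ≤ x) (h0 : 0 ≤ lam) (h1 : lam ≤ 1) :
    lam * Real.logb 2 (1 + x) ≤ Real.logb 2 (1 + lam * x) := by
  have h := aux_log_concave hx h0 h1
  rw [Real.logb, Real.logb, ← mul_div_assoc]
  gcongr

/-- **Multiplicative near-optimality of the Fixed Fraction Policy.** For i.i.d. nonnegative
arrivals `E`, battery capacity `B > 0`, SNR `γ > 0`, `μ = 𝔼[min (E 1) B] > 0`,
`q = μ / B`, battery `b 1 = B`, `b (t+1) = min ((1-q) b t + min (E (t+1)) B) B`, and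
the Fixed Fraction Policy `g t = q * b t`, the long-term average throughput satisfies
`liminf_n (1/n) ∑_{t=1}^n 𝔼[½ log₂(1 + γ g t)] ≥ (1/2) ½ log₂(1 + γ μ)`. -/
theorem stmt_12 {Ω : Type*} [MeasurableSpace Ω] (P : Measure Ω) [IsProbabilityMeasure P]
    (B γ : ℝ) (hB : 0 < B) (hγ : 0 < γ)
    (E : ℕ → Ω → ℝ) (hEmeas : ∀ t, Measurable (E t))
    (hEnn : ∀ t ω, 0 ≤ E t ω)
    (hindep : iIndepFun E P)
    (hident : ∀ t, IdentDistrib (E t) (E 1) P P)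
    (μ q : ℝ) (hμ : μ = ∫ ω, min (E 1 ω) B ∂P) (hμpos : 0 < μ) (hq : q = μ / B)
    (b g : ℕ → Ω → ℝ)
    (hb1 : ∀ ω, b 1 ω = B)
    (hbrec : ∀ t, 1 ≤ t → ∀ ω,
      b (t + 1) ω = min ((1 - q) * b t ω + min (E (t + 1) ω) B) B)
    (hg : ∀ t, 1 ≤ t → ∀ ω, g t ω = q * b t ω) :
    (1 / 2) * ((1 / 2) * Real.logb 2 (1 + γ * μ))
      ≤ liminf (fun n : ℕ => (1 / (n : ℝ)) * ∑ t ∈ Finset.Icc 1 n,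
          ∫ ω, (1 / 2) * Real.logb 2 (1 + γ * g t ω) ∂P) atTop := by
  -- the truncated arrivals
  set Y : ℕ → Ω → ℝ := fun t ω => min (E t ω) B with hYdef
  have hYmeas : ∀ t, Measurable (Y t) := fun t => (hEmeas t).min measurable_const
  have hYnn : ∀ t ω, 0 ≤ Y t ω := fun t ω => le_min (hEnn t ω) hB.le
  have hYle : ∀ t ω, Y t ω ≤ B := fun t ω => min_le_right _ _
  -- generic integrability of bounded measurable functions
  have intb : ∀ (C : ℝ) (f : Ω → ℝ), Measurable f → (∀ ω, ‖f ω‖ ≤ C) → Integrable f P :=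
    fun C f hf hbd => ⟨hf.aestronglyMeasurable,
      HasFiniteIntegral.of_bounded (Eventually.of_forall hbd)⟩
  have hYint : ∀ t, Integrable (Y t) P := fun t =>
    intb B (Y t) (hYmeas t) (fun ω => by
      rw [Real.norm_eq_abs, abs_le]; exact ⟨by linarith [hYnn t ω], hYle t ω⟩)
  have hYμ : ∀ t, ∫ ω, Y t ω ∂P = μ := by
    intro t
    rw [hμ]
    exact ((hident t).comp (measurable_id.min measurable_const)).integral_eq
  have hμB : μ ≤ B := by
    rw [hμ]
    calc ∫ ω, min (E 1 ω) B ∂P ≤ ∫ _, B ∂P :=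
          integral_mono (hYint 1) (integrable_const B) (fun ω => hYle 1 ω)
      _ = B := by simp
  have hq0 : 0 < q := hq ▸ div_pos hμpos hB
  have hq1 : q ≤ 1 := hq ▸ (div_le_one hB).2 hμB
  have hqB : q * B = μ := by rw [hq]; field_simp
  -- main induction: measurability, bounds, representation
  have main : ∀ t, 1 ≤ t → Measurable (b t) ∧ (∀ ω, 0 ≤ b t ω ∧ b t ω ≤ B) ∧
      (∃ φ : ((Finset.range (t+1) : Finset ℕ) → ℝ) → ℝ,
        Measurable φ ∧ ∀ ω, b t ω = φ (fun i => E i ω)) := by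
    intro t ht
    induction t, ht using Nat.le_induction with
    | base =>
      refine ⟨?_, fun ω => by rw [hb1 ω]; exact ⟨hB.le, le_refl B⟩, ?_⟩
      · have : b 1 = fun _ => B := funext hb1
        rw [this]; exact measurable_const
      · exact ⟨fun _ => B, measurable_const, fun ω => (hb1 ω)⟩
    | succ t ht ih =>
      obtain ⟨hmeas, hbd, φ, hφ, hrep⟩ := ih
      refine ⟨?_, ?_, ?_⟩
      · have : b (t+1) = fun ω => min ((1 - q) * b t ω + Y (t+1) ω) B :=
          funext (hbrec t ht)
        rw [this]
        exact ((measurable_const.mul hmeas).add (hYmeas (t+1))).min measurable_const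
      · intro ω
        rw [hbrec t ht ω]
        constructor
        · apply le_min _ hB.le
          have := (hbd ω).1
          have := hYnn (t+1) ω
          nlinarith
        · exact min_le_right _ _
      · refine ⟨fun v => min ((1 - q) * φ (fun i =>
            v ⟨i.1, Finset.mem_range.2 (Nat.lt_succ_of_lt (Finset.mem_range.1 i.2))⟩)
            + min (v ⟨t+1, Finset.mem_range.2 (Nat.lt_succ_self _)⟩) B) B, ?_, ?_⟩
        · have m1 : Measurable fun (v : (Finset.range (t+2) : Finset ℕ) → ℝ) =>
              φ (fun i => v ⟨i.1, Finset.mem_range.2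
                (Nat.lt_succ_of_lt (Finset.mem_range.1 i.2))⟩) :=
            hφ.comp (measurable_pi_lambda _ (fun i => measurable_pi_apply _))
          exact ((measurable_const.mul m1).add
            ((measurable_pi_apply _).min measurable_const)).min measurable_const
        · intro ω
          rw [hbrec t ht ω, hrep ω]
  have hbmeas : ∀ t, 1 ≤ t → Measurable (b t) := fun t ht => (main t ht).1
  have hbbd : ∀ t, 1 ≤ t → ∀ ω, 0 ≤ b t ω ∧ b t ω ≤ B := fun t ht => (main t ht).2.1
  have hbint : ∀ t, 1 ≤ t → Integrable (b t) P := fun t ht =>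
    intb B (b t) (hbmeas t ht) (fun ω => by
      rw [Real.norm_eq_abs, abs_le]
      exact ⟨by linarith [(hbbd t ht ω).1], (hbbd t ht ω).2⟩)
  -- independence of b t and Y (t+1)
  have hbindep : ∀ t, 1 ≤ t → IndepFun (b t) (Y (t+1)) P := by
    intro t ht
    obtain ⟨-, -, φ, hφ, hrep⟩ := main t ht
    have hdisj : Disjoint (Finset.range (t+1)) ({t+1} : Finset ℕ) := by simp
    have hψ : Measurable fun (v : (({t+1} : Finset ℕ) : Finset ℕ) → ℝ) =>
        min (v ⟨t+1, Finset.mem_singleton_self _⟩) B :=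
      (measurable_pi_apply _).min measurable_const
    have h2 := (hindep.indepFun_finset (Finset.range (t+1)) {t+1} hdisj hEmeas).comp hφ hψ
    convert h2 using 1
    · funext ω; exact hrep ω
    · funext ω; rfl
  -- product formula
  have hmul : ∀ t, 1 ≤ t → ∫ ω, b t ω * Y (t+1) ω ∂P = (∫ ω, b t ω ∂P) * μ := by
    intro t ht
    have h := (hbindep t ht).integral_mul_eq_mul_integral (hbint t ht).1 (hYint (t+1)).1
    rw [← hYμ (t+1)]
    simpa [Pi.mul_apply] using h
  -- pathwise key inequality
  have hpath : ∀ t, 1 ≤ t → ∀ ω,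
      (1 - q) * b t ω + Y (t+1) ω - b t ω * Y (t+1) ω / B ≤ b (t+1) ω := by
    intro t ht ω
    rw [hbrec t ht ω]
    have hbb := hbbd t ht ω
    have hY0 := hYnn (t+1) ω
    have hYB := hYle (t+1) ω
    rcases le_total ((1 - q) * b t ω + Y (t+1) ω) B with h | h
    · rw [min_eq_left h]
      have : 0 ≤ b t ω * Y (t+1) ω / B :=
        div_nonneg (mul_nonneg hbb.1 hY0) hB.le
      linarith
    · rw [min_eq_right h]
      rw [sub_le_iff_le_add, ← sub_le_iff_le_add', le_div_iff₀ hB]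
      nlinarith [mul_nonneg (by linarith [hbb.2] : (0:ℝ) ≤ B - b t ω)
          (by linarith : (0:ℝ) ≤ B - Y (t+1) ω),
        mul_nonneg (mul_nonneg hq0.le hbb.1) hB.le]
  -- b 1 integral
  have hI1 : ∫ ω, b 1 ω ∂P = B := by
    simp only [hb1, integral_const, probReal_univ, smul_eq_mul, one_mul]
  -- the expectation recursion
  have hrecE : ∀ t, 1 ≤ t →
      (1 - 2*q) * (∫ ω, b t ω ∂P) + μ ≤ ∫ ω, b (t+1) ω ∂P := by
    intro t ht
    have int1 : Integrable (fun ω => (1 - q) * b t ω) P := (hbint t ht).const_mul _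
    have int2 : Integrable (fun ω => (1 - q) * b t ω + Y (t+1) ω) P := int1.add (hYint (t+1))
    have int3 : Integrable (fun ω => b t ω * Y (t+1) ω / B) P := by
      apply intb B _ (((hbmeas t ht).mul (hYmeas (t+1))).div_const B)
      intro ω
      rw [Real.norm_eq_abs, abs_le, Pi.mul_apply]
      constructor
      · have : 0 ≤ b t ω * Y (t+1) ω / B :=
          div_nonneg (mul_nonneg (hbbd t ht ω).1 (hYnn (t+1) ω)) hB.le
        linarith
      · rw [div_le_iff₀ hB]
        nlinarith [(hbbd t ht ω).1, (hbbd t ht ω).2, hYnn (t+1) ω, hYle (t+1) ω]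
    have hle := integral_mono (int2.sub int3) (hbint (t+1) (by omega))
      (fun ω => hpath t ht ω)
    simp only [Pi.sub_apply] at hle
    rw [integral_sub int2 int3, integral_add int1 (hYint (t+1)), integral_const_mul,
      integral_div, hmul t ht, hYμ (t+1)] at hle
    calc (1 - 2*q) * (∫ ω, b t ω ∂P) + μ
        = (1 - q) * ∫ ω, b t ω ∂P + μ - (∫ ω, b t ω ∂P) * μ / B := by
          have hqI : (∫ ω, b t ω ∂P) * μ / B = q * ∫ ω, b t ω ∂P := by
            rw [hq]; ring
          rw [hqI]; ring
      _ ≤ ∫ ω, b (t+1) ω ∂P := hle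
  -- expected battery at least half full
  have hEb : ∀ t, 1 ≤ t → B/2 ≤ ∫ ω, b t ω ∂P := by
    intro t ht
    rcases le_total q (1/2) with hq2 | hq2
    · induction t, ht using Nat.le_induction with
      | base => rw [hI1]; linarith
      | succ t ht ih =>
        have h1 := hrecE t ht
        have h2 : (1 - 2*q) * (B/2) + μ ≤ (1 - 2*q) * (∫ ω, b t ω ∂P) + μ := by
          have := mul_le_mul_of_nonneg_left ih (by linarith : (0:ℝ) ≤ 1 - 2*q)
          linarith
        have : (1 - 2*q) * (B/2) + μ = B/2 + (μ - q*B) := by ring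
        rw [hqB] at *
        linarith [h2, h1, this]
    · -- q ≥ 1/2 : battery at least the last arrival
      rcases Nat.lt_or_ge t 2 with h2 | h2
      · interval_cases t
        rw [hI1]; linarith
      · obtain ⟨s, rfl⟩ : ∃ s, t = s + 1 := ⟨t - 1, by omega⟩
        have hs : 1 ≤ s := by omega
        have hpt : ∀ ω, Y (s+1) ω ≤ b (s+1) ω := by
          intro ω
          rw [hbrec s hs ω]
          refine le_min ?_ (hYle (s+1) ω)
          have := (hbbd s hs ω).1
          have : 0 ≤ (1 - q) * b s ω := mul_nonneg (by linarith) this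
          linarith
        have := integral_mono (hYint (s+1)) (hbint (s+1) (by omega)) hpt
        rw [hYμ (s+1)] at this
        nlinarith [hqB]
  -- per-term bounds
  set C := Real.logb 2 (1 + γ * μ) with hCdef
  have hC0 : 0 ≤ C := Real.logb_nonneg one_lt_two (by nlinarith [mul_pos hγ hμpos])
  set J : ℕ → ℝ := fun t => ∫ ω, (1 / 2) * Real.logb 2 (1 + γ * g t ω) ∂P with hJdef
  have hintJ : ∀ t, 1 ≤ t → Integrable (fun ω => (1 / 2) * Real.logb 2 (1 + γ * g t ω)) P ∧
      (∀ ω, 0 ≤ (1 / 2) * Real.logb 2 (1 + γ * g t ω) ∧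
        (1 / 2) * Real.logb 2 (1 + γ * g t ω) ≤ (1/2) * C) := by
    intro t ht
    have hgnn : ∀ ω, 0 ≤ g t ω := fun ω => by
      rw [hg t ht ω]; exact mul_nonneg hq0.le (hbbd t ht ω).1
    have hgle : ∀ ω, g t ω ≤ μ := fun ω => by
      rw [hg t ht ω, ← hqB]
      exact mul_le_mul_of_nonneg_left (hbbd t ht ω).2 hq0.le
    have hbd : ∀ ω, 0 ≤ (1 / 2) * Real.logb 2 (1 + γ * g t ω) ∧
        (1 / 2) * Real.logb 2 (1 + γ * g t ω) ≤ (1/2) * C := by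
      intro ω
      have h1 : (1:ℝ) ≤ 1 + γ * g t ω := by nlinarith [hgnn ω]
      constructor
      · have := Real.logb_nonneg one_lt_two h1
        linarith
      · have h2 : Real.logb 2 (1 + γ * g t ω) ≤ C := by
          rw [hCdef]
          apply Real.logb_le_logb_of_le one_lt_two (by linarith)
          nlinarith [hgle ω]
        linarith
    have hm : Measurable fun ω => (1 / 2) * Real.logb 2 (1 + γ * g t ω) := by
      have he : (fun ω => (1 / 2) * Real.logb 2 (1 + γ * g t ω))
          = fun ω => (1 / 2) * (Real.log (1 + γ * (q * b t ω)) / Real.log 2) := by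
        funext ω; rw [hg t ht ω, Real.logb]
      rw [he]
      exact measurable_const.mul ((Real.measurable_log.comp
        (measurable_const.add (measurable_const.mul
          (measurable_const.mul (hbmeas t ht))))).div_const _)
    refine ⟨intb ((1/2)*C) _ hm (fun ω => ?_), hbd⟩
    rw [Real.norm_eq_abs, abs_of_nonneg (hbd ω).1]
    exact (hbd ω).2
  have hJlow : ∀ t, 1 ≤ t → (1/2) * ((1/2) * C) ≤ J t := by
    intro t ht
    have hpt : ∀ ω, ((1/2) * C / B) * b t ω ≤ (1 / 2) * Real.logb 2 (1 + γ * g t ω) := by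
      intro ω
      have h1 := aux_logb_concave (x := γ * μ) (lam := b t ω / B)
        (by positivity) (div_nonneg (hbbd t ht ω).1 hB.le) ((div_le_one hB).2 (hbbd t ht ω).2)
      have he : 1 + b t ω / B * (γ * μ) = 1 + γ * g t ω := by
        rw [hg t ht ω, hq]; field_simp
      rw [he, ← hCdef] at h1
      calc ((1/2) * C / B) * b t ω = (1/2) * (b t ω / B * C) := by ring
        _ ≤ (1 / 2) * Real.logb 2 (1 + γ * g t ω) := by linarith
    have hcoef : 0 ≤ (1/2) * C / B := by positivity
    calc (1/2) * ((1/2) * C) = ((1/2) * C / B) * (B / 2) := by field_simp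
      _ ≤ ((1/2) * C / B) * ∫ ω, b t ω ∂P := mul_le_mul_of_nonneg_left (hEb t ht) hcoef
      _ = ∫ ω, ((1/2) * C / B) * b t ω ∂P := (integral_const_mul _ _).symm
      _ ≤ J t := integral_mono ((hbint t ht).const_mul _) (hintJ t ht).1 hpt
  have hJhigh : ∀ t, 1 ≤ t → J t ≤ (1/2) * C := by
    intro t ht
    calc J t ≤ ∫ _, (1/2) * C ∂P :=
          integral_mono (hintJ t ht).1 (integrable_const _) (fun ω => ((hintJ t ht).2 ω).2)
      _ = (1/2) * C := by simp
  -- upper bound for coboundedness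
  have hub : ∀ n : ℕ, (1 / (n : ℝ)) * ∑ t ∈ Finset.Icc 1 n, J t ≤ (1/2) * C := by
    intro n
    rcases Nat.eq_zero_or_pos n with rfl | hn
    · simp; positivity
    · have hsum : ∑ t ∈ Finset.Icc 1 n, J t ≤ (n : ℝ) * ((1/2) * C) := by
        calc ∑ t ∈ Finset.Icc 1 n, J t ≤ ∑ _t ∈ Finset.Icc 1 n, (1/2) * C :=
            Finset.sum_le_sum (fun t htm => hJhigh t (Finset.mem_Icc.1 htm).1)
          _ = (n : ℝ) * ((1/2) * C) := by
            rw [Finset.sum_const, Nat.card_Icc]; simp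
      have h0 : (0:ℝ) < (n:ℝ) := by exact_mod_cast hn
      calc (1 / (n : ℝ)) * ∑ t ∈ Finset.Icc 1 n, J t
          ≤ (1 / (n : ℝ)) * ((n : ℝ) * ((1/2) * C)) :=
            mul_le_mul_of_nonneg_left hsum (by positivity)
        _ = (1/2) * C := by field_simp
  refine le_liminf_of_le ?_ ?_
  · exact isCoboundedUnder_ge_of_le atTop hub
  · filter_upwards [eventually_ge_atTop 1] with n hn
    have h0 : (0:ℝ) < (n:ℝ) := by exact_mod_cast hn
    have hsum : (n : ℝ) * ((1/2) * ((1/2) * C)) ≤ ∑ t ∈ Finset.Icc 1 n, J t := by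
      calc (n : ℝ) * ((1/2) * ((1/2) * C)) = ∑ _t ∈ Finset.Icc 1 n, (1/2) * ((1/2) * C) := by
            rw [Finset.sum_const, Nat.card_Icc]; simp
        _ ≤ ∑ t ∈ Finset.Icc 1 n, J t :=
            Finset.sum_le_sum (fun t htm => hJlow t (Finset.mem_Icc.1 htm).1)
    calc (1/2) * ((1/2) * C) = (1 / (n : ℝ)) * ((n : ℝ) * ((1/2) * ((1/2) * C))) := by
          field_simp
      _ ≤ (1 / (n : ℝ)) * ∑ t ∈ Finset.Icc 1 n, J t :=
          mul_le_mul_of_nonneg_left hsum (by positivity)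
end
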